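/- arXiv:1803.04452 — 6 statements merged into one kernel-verified Lean document; each statement's English description precedes it below -/
import Mathlib

section
/- Let G^X = (V, E^X, s) be an extraction order (rooted DAG with all vertices reachable from the root s). For any vertex l ∈ V and any two incoming edges e, e' of l, the label sets of e and e' coincide: for every vertex j, some confluence with target j contains e if and only if some confluence with target j contains e'. -/
/-- The list of consecutive edges traversed by a path given as a list of vertices. -/
def pathEdges {V : Type*} (p : List V) : List (V × V) := p.zip p.tail

/-- A (simple) directed path from `a` to `b` in the edge set `E`, given as the
nonempty list of visited vertices. -/
def IsPath {V : Type*} (E : Finset (V × V)) (a b : V) (p : List V) : Prop :=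
  p ≠ [] ∧ p.head? = some a ∧ p.getLast? = some b ∧ p.Nodup ∧
    ∀ e ∈ pathEdges p, e ∈ E

/-- An extraction order: a rooted DAG in which every vertex is reachable from the root. -/
structure ExtractionOrder (V : Type*) where
  E : Finset (V × V)
  root : V
  reach : ∀ v : V, ∃ p : List V, IsPath E root v p
  acyclic : ∀ u v : V, (u, v) ∈ E → ¬ ∃ p : List V, IsPath E v u p

/-- A confluence from `i` to `j`: two distinct directed paths from `i` to `j`
that are vertex-disjoint except at their shared endpoints. -/
def IsConfluence {V : Type*} (E : Finset (V × V)) (i j : V) (p₁ p₂ : List V) : Prop :=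
  i ≠ j ∧ p₁ ≠ p₂ ∧ IsPath E i j p₁ ∧ IsPath E i j p₂ ∧
    ∀ v, v ∈ p₁ → v ∈ p₂ → v = i ∨ v = j

/-- The edge `e` is labeled with `j` iff some confluence with target `j` contains `e`. -/
def IsLabeled {V : Type*} (E : Finset (V × V)) (e : V × V) (j : V) : Prop :=
  ∃ i p₁ p₂, IsConfluence E i j p₁ p₂ ∧ (e ∈ pathEdges p₁ ∨ e ∈ pathEdges p₂)

/-- The edge `e` lies on some directed path from `i` to `j`. -/
def OnPath {V : Type*} (E : Finset (V × V)) (i j : V) (e : V × V) : Prop :=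
  ∃ p, IsPath E i j p ∧ e ∈ pathEdges p

/-- The label set of an edge. -/
def labelSet {V : Type*} (E : Finset (V × V)) (e : V × V) : Set V :=
  {j | IsLabeled E e j}

/-- Two edges lie in the same edge bag (of the common tail `e.1`) iff they are linked by a
chain of outgoing edges of `e.1` with pairwise intersecting label sets. -/
def inSameBag {V : Type*} (E : Finset (V × V)) (e e' : V × V) : Prop :=
  Relation.ReflTransGen
    (fun a b => a ∈ E ∧ b ∈ E ∧ a.1 = e.1 ∧ b.1 = e.1 ∧
      (labelSet E a ∩ labelSet E b).Nonempty) e e'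

/-- The union of the label sets of the edges in the bag of `e`. -/
def bagLabels {V : Type*} (E : Finset (V × V)) (e : V × V) : Set V :=
  {j | ∃ e', inSameBag E e e' ∧ IsLabeled E e' j}

/-- The width of an extraction order: one plus the maximal number of labels in any edge bag. -/
noncomputable def widthX {V : Type*} (X : ExtractionOrder V) : ℕ :=
  1 + X.E.sup (fun e => (bagLabels X.E e).ncard)

/-- `EX` is obtained from `E` by possibly reversing the orientation of some edges. -/
def IsOrientationOf {V : Type*} (EX E : Finset (V × V)) : Prop :=
  (∀ u v : V, (u, v) ∈ EX → (u, v) ∈ E ∨ (v, u) ∈ E) ∧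
  (∀ u v : V, (u, v) ∈ E → (u, v) ∈ EX ∨ (v, u) ∈ EX)

/-- The extraction width of a directed graph: the minimum width over all its extraction orders. -/
noncomputable def extractionWidth {V : Type*} (E : Finset (V × V)) : ℕ :=
  sInf {w | ∃ X : ExtractionOrder V, IsOrientationOf X.E E ∧ widthX X = w}

/-- The underlying undirected simple graph of a directed edge set. -/
def underlying {V : Type*} (E : Finset (V × V)) : SimpleGraph V where
  Adj u v := u ≠ v ∧ ((u, v) ∈ E ∨ (v, u) ∈ E)
  symm := by constructor; intro u v h; exact ⟨h.1.symm, h.2.elim Or.inr Or.inl⟩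
  loopless := by constructor; intro u h; exact h.1 rfl

namespace Aux
variable {V : Type*} {E : Finset (V × V)} {a b c x y u' l j : V} {p q : List V}

lemma pathEdges_cons (a b : V) (t : List V) :
    pathEdges (a :: b :: t) = (a, b) :: pathEdges (b :: t) := by
  simp [pathEdges]

lemma edges_iff_chain' (p : List V) :
    (∀ e ∈ pathEdges p, e ∈ E) ↔ p.Chain' (fun x y => (x, y) ∈ E) := by
  induction p with
  | nil => simp [pathEdges]; exact List.isChain_nil
  | cons a t ih =>
    cases t with
    | nil => simp [pathEdges]; exact List.isChain_singleton _
    | cons b t' =>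
      simp only [List.Chain'] at ih ⊢
      rw [pathEdges_cons, List.isChain_cons_cons, ← ih]
      constructor
      · intro h; exact ⟨h _ (by simp), fun e he => h e (by simp [he])⟩
      · rintro ⟨h1, h2⟩ e he
        rcases List.mem_cons.1 he with rfl | he
        · exact h1
        · exact h2 e he

def IsWalk (E : Finset (V × V)) (a b : V) (p : List V) : Prop :=
  p ≠ [] ∧ p.head? = some a ∧ p.getLast? = some b ∧
    p.Chain' (fun x y => (x, y) ∈ E)

lemma isWalk_of_isPath (h : IsPath E a b p) : IsWalk E a b p :=
  ⟨h.1, h.2.1, h.2.2.1, (edges_iff_chain' p).1 h.2.2.2.2⟩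

lemma isPath_of_walk_nodup (h : IsWalk E a b p) (hn : p.Nodup) : IsPath E a b p :=
  ⟨h.1, h.2.1, h.2.2.1, hn, (edges_iff_chain' p).2 h.2.2.2⟩

lemma walk_dedup_aux (n : ℕ) : ∀ (a b : V) (p : List V), p.length ≤ n → IsWalk E a b p →
    ∃ q, IsPath E a b q ∧ ∀ x ∈ q, x ∈ p := by
  induction n with
  | zero =>
    intro a b p hlen h
    cases p with
    | nil => exact absurd rfl h.1
    | cons _ _ => simp at hlen
  | succ n ih =>
    intro a b p hlen h
    obtain ⟨hne, hh, hl, hc⟩ := h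
    cases p with
    | nil => exact absurd rfl hne
    | cons x rest =>
      have hax : a = x := by simpa using hh.symm
      subst hax
      by_cases hx : a ∈ rest
      · obtain ⟨s, t, rfl⟩ := List.append_of_mem hx
        have hsuf : (a :: t) <:+ (a :: (s ++ a :: t)) :=
          (List.suffix_append s (a :: t)).trans (List.suffix_cons _ _)
        have hw : IsWalk E a b (a :: t) := by
          refine ⟨List.cons_ne_nil _ _, rfl, ?_, hc.suffix hsuf⟩
          rw [show a :: (s ++ a :: t) = (a :: s) ++ a :: t from rfl,
            List.getLast?_append_cons] at hl
          exact hl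
        have hlen' : (a :: t).length ≤ n := by
          simp only [List.length_cons, List.length_append] at hlen ⊢
          omega
        obtain ⟨q, hq, hsub⟩ := ih a b _ hlen' hw
        exact ⟨q, hq, fun z hz => hsuf.subset (hsub z hz)⟩
      · cases rest with
        | nil =>
          exact ⟨[a], isPath_of_walk_nodup ⟨hne, hh, hl, hc⟩ (by simp), by simp⟩
        | cons r rest' =>
          have hw : IsWalk E r b (r :: rest') := by
            refine ⟨List.cons_ne_nil _ _, rfl, ?_, hc.tail⟩
            rw [show a :: r :: rest' = [a] ++ r :: rest' from rfl,
              List.getLast?_append_of_ne_nil _ (List.cons_ne_nil _ _)] at hl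
            exact hl
          obtain ⟨q, hq, hsub⟩ := ih r b _ (by simpa using hlen) hw
          cases q with
          | nil => exact absurd rfl hq.1
          | cons q0 qt =>
            have hq0 : q0 = r := by simpa using hq.2.1
            refine ⟨a :: q0 :: qt, ?_, ?_⟩
            · refine ⟨List.cons_ne_nil _ _, rfl, ?_, ?_, ?_⟩
              · rw [show a :: q0 :: qt = [a] ++ q0 :: qt from rfl,
                  List.getLast?_append_of_ne_nil _ (List.cons_ne_nil _ _)]
                exact hq.2.2.1
              · refine List.nodup_cons.2 ⟨fun hmem => hx ?_, hq.2.2.2.1⟩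
                exact hsub a hmem
              · rw [edges_iff_chain']
                simp only [List.Chain']
                rw [List.isChain_cons_cons]
                refine ⟨by rw [hq0]; exact (List.isChain_cons_cons.1 hc).1,
                  (edges_iff_chain' _).1 hq.2.2.2.2⟩
            · intro z hz
              rcases List.mem_cons.1 hz with rfl | hz
              · simp
              · exact List.mem_cons_of_mem _ (hsub z hz)

lemma walk_dedup (h : IsWalk E a b p) :
    ∃ q, IsPath E a b q ∧ ∀ x ∈ q, x ∈ p :=
  walk_dedup_aux p.length a b p le_rfl h


lemma walk_append (h1 : IsWalk E a b p) (h2 : IsWalk E b c q) :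
    IsWalk E a c (p ++ q.tail) := by
  obtain ⟨hne1, hh1, hl1, hc1⟩ := h1
  obtain ⟨hne2, hh2, hl2, hc2⟩ := h2
  cases q with
  | nil => exact absurd rfl hne2
  | cons q0 qt =>
    have hq0 : q0 = b := by simpa using hh2
    subst hq0
    cases qt with
    | nil =>
      have : q0 = c := by simpa using hl2
      rw [← this]
      simpa using ⟨hne1, hh1, hl1, hc1⟩
    | cons q1 qt' =>
      refine ⟨by simp [hne1], by rwa [List.head?_append_of_ne_nil _ hne1], ?_, ?_⟩
      · show (p ++ q1 :: qt').getLast? = some c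
        rw [List.getLast?_append_of_ne_nil _ (List.cons_ne_nil _ _)]
        rw [show q0 :: q1 :: qt' = [q0] ++ q1 :: qt' from rfl,
          List.getLast?_append_of_ne_nil _ (List.cons_ne_nil _ _)] at hl2
        exact hl2
      · refine List.IsChain.append hc1 hc2.tail ?_
        intro x hx y hy
        have hx' : q0 = x := by rw [hl1] at hx; simpa using hx
        have hy' : q1 = y := by simpa using hy
        rw [← hx', ← hy']
        exact (List.isChain_cons_cons.1 hc2).1

def Reaches (E : Finset (V × V)) (a b : V) : Prop := ∃ p, IsPath E a b p

lemma reaches_trans (h1 : Reaches E a b) (h2 : Reaches E b c) : Reaches E a c := by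
  obtain ⟨p, hp⟩ := h1; obtain ⟨q, hq⟩ := h2
  obtain ⟨r, hr, _⟩ := walk_dedup (walk_append (isWalk_of_isPath hp) (isWalk_of_isPath hq))
  exact ⟨r, hr⟩

/-- Suffix of a path from a member vertex. -/
lemma path_suffix (h : IsPath E a b p) (hx : x ∈ p) :
    ∃ s t, p = s ++ x :: t ∧ IsPath E x b (x :: t) := by
  obtain ⟨s, t, rfl⟩ := List.append_of_mem hx
  refine ⟨s, t, rfl, List.cons_ne_nil _ _, rfl, ?_, ?_, ?_⟩
  · have h3 := h.2.2.1
    rwa [List.getLast?_append_cons] at h3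
  · exact (List.sublist_append_right s _).nodup h.2.2.2.1
  · rw [edges_iff_chain']
    exact ((edges_iff_chain' _).1 h.2.2.2.2).suffix (List.suffix_append s _)

/-- Prefix of a path up to a member vertex. -/
lemma path_prefix (h : IsPath E a b p) (hx : x ∈ p) :
    ∃ s t, p = s ++ x :: t ∧ IsPath E a x (s ++ [x]) := by
  obtain ⟨s, t, rfl⟩ := List.append_of_mem hx
  have hpre : (s ++ [x]) <+: (s ++ x :: t) := by
    refine ⟨t, by simp⟩
  refine ⟨s, t, rfl, by simp, ?_, by simp, ?_, ?_⟩
  · cases s with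
    | nil => simpa using h.2.1
    | cons s0 s' => simpa using h.2.1
  · exact (hpre.sublist).nodup h.2.2.2.1
  · rw [edges_iff_chain']
    exact ((edges_iff_chain' _).1 h.2.2.2.2).prefix hpre

lemma reaches_of_mem_left (h : IsPath E a b p) (hx : x ∈ p) : Reaches E a x := by
  obtain ⟨s, t, -, h2⟩ := path_prefix h hx; exact ⟨_, h2⟩

lemma reaches_of_mem_right (h : IsPath E a b p) (hx : x ∈ p) : Reaches E x b := by
  obtain ⟨s, t, -, h2⟩ := path_suffix h hx; exact ⟨_, h2⟩


lemma mem_of_mem_pathEdges {e : V × V} (h : e ∈ pathEdges p) :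
    e.1 ∈ p ∧ e.2 ∈ p.tail := by
  obtain ⟨e1, e2⟩ := e
  exact List.of_mem_zip h

lemma pathEdges_cons_superset {e : V × V} (a : V) (h : e ∈ pathEdges p) :
    e ∈ pathEdges (a :: p) := by
  cases p with
  | nil => simp [pathEdges] at h
  | cons b t => rw [pathEdges_cons]; exact List.mem_cons_of_mem _ h

lemma pathEdges_append_right {e : V × V} (h : e ∈ pathEdges q) (p : List V) :
    e ∈ pathEdges (p ++ q) := by
  induction p with
  | nil => simpa using h
  | cons a p ih => exact pathEdges_cons_superset a ih

lemma pathEdges_append_mem (hx : p.getLast? = some x) (hy : q.head? = some y) :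
    (x, y) ∈ pathEdges (p ++ q) := by
  induction p with
  | nil => simp at hx
  | cons a p ih =>
    cases p with
    | nil =>
      have : a = x := by simpa using hx
      subst this
      cases q with
      | nil => simp at hy
      | cons q0 qt =>
        have : q0 = y := by simpa using hy
        subst this
        rw [List.cons_append, List.nil_append, pathEdges_cons]
        exact List.mem_cons_self
    | cons b p' =>
      rw [show ((a :: b :: p') ++ q) = a :: ((b :: p') ++ q) from rfl]
      refine pathEdges_cons_superset a (ih ?_)
      rwa [List.getLast?_cons_cons] at hx

lemma pathEdges_append_cases {e : V × V} (h : e ∈ pathEdges (p ++ q)) :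
    e ∈ pathEdges p ∨ e ∈ pathEdges q ∨
      (p.getLast? = some e.1 ∧ q.head? = some e.2) := by
  induction p with
  | nil => right; left; simpa using h
  | cons a p ih =>
    cases p with
    | nil =>
      cases q with
      | nil => left; simpa using h
      | cons q0 qt =>
        rw [List.cons_append, List.nil_append, pathEdges_cons] at h
        rcases List.mem_cons.1 h with rfl | h
        · right; right; exact ⟨rfl, rfl⟩
        · right; left; exact h
    | cons b p' =>
      rw [show ((a :: b :: p') ++ q) = a :: b :: (p' ++ q) from rfl, pathEdges_cons] at h
      rcases List.mem_cons.1 h with rfl | h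
      · left; rw [pathEdges_cons]; exact List.mem_cons_self
      · rcases ih h with h1 | h2 | h3
        · left; exact pathEdges_cons_superset a h1
        · right; left; exact h2
        · right; right; exact ⟨by rw [List.getLast?_cons_cons]; exact h3.1, h3.2⟩


/-- Split a list at the last element belonging to `Qs`. -/
lemma split_last_such (p Qs : List V) (h : ∃ x ∈ p, x ∈ Qs) :
    ∃ s i t, p = s ++ i :: t ∧ i ∈ Qs ∧ ∀ x ∈ t, x ∉ Qs := by
  classical
  induction p using List.reverseRecOn with
  | nil => simp at h
  | append_singleton p a ih =>
    by_cases ha : a ∈ Qs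
    · exact ⟨p, a, [], rfl, ha, by simp⟩
    · obtain ⟨x, hxp, hxQ⟩ := h
      rcases List.mem_append.1 hxp with hxp | hxa
      · obtain ⟨s, i, t, rfl, hiQ, ht⟩ := ih ⟨x, hxp, hxQ⟩
        refine ⟨s, i, t ++ [a], by simp, hiQ, ?_⟩
        intro z hz
        rcases List.mem_append.1 hz with hz | hz
        · exact ht z hz
        · rw [List.mem_singleton.1 hz]; exact ha
      · rw [List.mem_singleton.1 hxa] at hxQ; exact absurd hxQ ha


lemma path_suffix' {s t : List V} (h : IsPath E a b (s ++ x :: t)) :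
    IsPath E x b (x :: t) := by
  refine ⟨List.cons_ne_nil _ _, rfl, ?_, ?_, ?_⟩
  · have h3 := h.2.2.1
    rwa [List.getLast?_append_cons] at h3
  · exact (List.sublist_append_right s _).nodup h.2.2.2.1
  · rw [edges_iff_chain']
    exact ((edges_iff_chain' _).1 h.2.2.2.2).suffix (List.suffix_append s _)

lemma walk_append_edge (h1 : IsWalk E a b p) (h2 : IsWalk E c x q)
    (he : (b, c) ∈ E) : IsWalk E a x (p ++ q) := by
  refine ⟨by simp [h1.1], by rw [List.head?_append_of_ne_nil _ h1.1]; exact h1.2.1,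
    by rw [List.getLast?_append_of_ne_nil _ h2.1]; exact h2.2.2.1, ?_⟩
  refine List.IsChain.append h1.2.2.2 h2.2.2.2 ?_
  intro z hz w hw
  have hz' : b = z := by rw [h1.2.2.1] at hz; simpa using hz
  have hw' : c = w := by rw [h2.2.1] at hw; simpa using hw
  rw [← hz', ← hw']; exact he

end Aux

namespace Aux
variable {V : Type*} {E : Finset (V × V)} {u' l j rt q0 : V}

lemma master (S Rst Q : List V)
    (hS : IsPath E rt u' S) (hR : IsPath E l j Rst) (hul : (u', l) ∈ E)
    (hdisj : ∀ x ∈ S, x ∉ Rst)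
    (hQ : IsPath E q0 j Q)
    (hq : ∃ x ∈ S, x ∈ Q)
    (hQR : ∀ x ∈ Q, x ∈ Rst → x = j)
    (hne : (u', l) ∉ pathEdges Q) :
    IsLabeled E (u', l) j := by
  obtain ⟨S₁, i, S₂, hSsplit, hiQ, hS₂⟩ := split_last_such S Q hq
  obtain ⟨Q₁, Q₂, hQsplit⟩ := List.append_of_mem hiQ
  -- the two branches
  set A : List V := (i :: S₂) ++ Rst with hAdef
  set B : List V := i :: Q₂ with hBdef
  have hSsuf : IsPath E i u' (i :: S₂) := path_suffix' (hSsplit ▸ hS)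
  have hBpath : IsPath E i j B := path_suffix' (hQsplit ▸ hQ)
  have hsubS : ∀ x ∈ (i :: S₂), x ∈ S := by
    intro x hx; rw [hSsplit]; exact List.mem_append_right _ hx
  have hsubB : ∀ x ∈ B, x ∈ Q := by
    intro x hx; rw [hQsplit]; exact List.mem_append_right _ hx
  have hApath : IsPath E i j A := by
    refine isPath_of_walk_nodup
      (walk_append_edge (isWalk_of_isPath hSsuf) (isWalk_of_isPath hR) hul) ?_
    refine List.Nodup.append hSsuf.2.2.2.1 hR.2.2.2.1 ?_
    intro x hx1 hx2
    exact hdisj x (hsubS x hx1) hx2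
  have hmemA : (u', l) ∈ pathEdges A :=
    pathEdges_append_mem hSsuf.2.2.1 hR.2.1
  have hij : i ≠ j := by
    intro hhh
    exact hdisj i (hsubS i (List.mem_cons_self))
      (hhh ▸ List.mem_of_mem_getLast? (by rw [hR.2.2.1]; rfl))
  have hAB : A ≠ B := by
    intro hhh
    apply hne
    have : (u', l) ∈ pathEdges B := hhh ▸ hmemA
    rw [hQsplit]
    exact pathEdges_append_right this Q₁
  refine ⟨i, A, B, ⟨hij, hAB, hApath, hBpath, ?_⟩, Or.inl hmemA⟩
  intro v hvA hvB
  rcases List.mem_append.1 hvA with hv | hv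
  · rcases List.mem_cons.1 hv with rfl | hv
    · exact Or.inl rfl
    · exact absurd (hsubB v hvB) (hS₂ v hv)
  · exact Or.inr (hQR v (hsubB v hvB) hv)

end Aux

namespace Aux
variable {V : Type*} {E : Finset (V × V)} {i j a b c : V} {p₁ p₂ : List V}

lemma conf_symm (h : IsConfluence E i j p₁ p₂) : IsConfluence E i j p₂ p₁ :=
  ⟨h.1, Ne.symm h.2.1, h.2.2.2.1, h.2.2.1, fun v h2 h1 => h.2.2.2.2 v h1 h2⟩

lemma no_cycle (X : ExtractionOrder V) (hab : a ≠ b)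
    (h1 : Reaches X.E a b) (h2 : Reaches X.E b a) : False := by
  obtain ⟨p, hp⟩ := h1
  cases p with
  | nil => exact hp.1 rfl
  | cons x t =>
    have hx : x = a := by simpa using hp.2.1
    subst hx
    cases t with
    | nil =>
      exact hab (by simpa using hp.2.2.1)
    | cons c t' =>
      have hedge : (x, c) ∈ X.E := hp.2.2.2.2 _ (by rw [pathEdges_cons]; simp)
      have hcb : Reaches X.E c b :=
        reaches_of_mem_right hp (by simp)
      exact X.acyclic x c hedge (reaches_trans hcb h2)

lemma head_mem_of_path {p : List V} (h : IsPath E a b p) : a ∈ p :=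
  List.mem_of_mem_head? (by rw [h.2.1]; rfl)

lemma key (X : ExtractionOrder V) (l u u' : V)
    (he : (u, l) ∈ X.E) (he' : (u', l) ∈ X.E) (j : V)
    (hlab : IsLabeled X.E (u, l) j) : IsLabeled X.E (u', l) j := by
  by_cases huu : u = u'
  · exact huu ▸ hlab
  have main : ∀ i₀ (p₁ p₂ : List V), IsConfluence X.E i₀ j p₁ p₂ →
      (u, l) ∈ pathEdges p₁ → IsLabeled X.E (u', l) j := by
    intro i₀ p₁ p₂ hconf hup₁
    obtain ⟨hij₀, hp12, hp₁, hp₂, hdisj12⟩ := hconf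
    have hnoLu' : ¬ Reaches X.E l u' := fun h => X.acyclic u' l he' h
    have hnoLu : ¬ Reaches X.E l u := fun h => X.acyclic u l he h
    obtain ⟨S, hSp⟩ := X.reach u'
    have hlS : l ∉ S := fun h => hnoLu' (reaches_of_mem_right hSp h)
    have hroot_S : X.root ∈ S := head_mem_of_path hSp
    have hl_tail : l ∈ p₁.tail := (mem_of_mem_pathEdges hup₁).2
    have hl_p₁ : l ∈ p₁ := (List.tail_sublist p₁).subset hl_tail
    have hlne_i₀ : l ≠ i₀ := by
      intro hhh
      cases p₁ with
      | nil => exact hp₁.1 rfl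
      | cons x t =>
        have hx : x = i₀ := by simpa using hp₁.2.1
        have : l ∈ t := by simpa using hl_tail
        exact (List.nodup_cons.1 hp₁.2.2.2.1).1 (by rw [hx, ← hhh]; exact this)
    by_cases hlj : l = j
    · -- target is l itself
      subst hlj
      have hR : IsPath X.E l l [l] := ⟨List.cons_ne_nil _ _, rfl, rfl, by simp, by simp [pathEdges]⟩
      obtain ⟨Pu, hPu⟩ := X.reach u
      have hlPu : l ∉ Pu := fun h => hnoLu (reaches_of_mem_right hPu h)
      have hQw : IsWalk X.E X.root l (Pu ++ [l]) :=
        walk_append_edge (isWalk_of_isPath hPu)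
          ⟨List.cons_ne_nil _ _, rfl, rfl, List.isChain_singleton _⟩ he
      have hQ : IsPath X.E X.root l (Pu ++ [l]) := by
        refine isPath_of_walk_nodup hQw ?_
        refine List.Nodup.append hPu.2.2.2.1 (by simp) ?_
        intro x hx1 hx2
        rw [List.mem_singleton.1 hx2] at hx1
        exact hlPu hx1
      refine master S [l] (Pu ++ [l]) hSp hR he' ?_ hQ ?_ ?_ ?_
      · intro x hx
        simp only [List.mem_singleton]
        rintro rfl; exact hlS hx
      · exact ⟨X.root, hroot_S, head_mem_of_path hQ⟩
      · intro x _ hx; simpa using hx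
      · intro hmem
        rcases pathEdges_append_cases hmem with h1 | h2 | h3
        · exact hlPu ((List.tail_sublist Pu).subset (mem_of_mem_pathEdges h1).2)
        · simp [pathEdges] at h2
        · have : Pu.getLast? = some u := hPu.2.2.1
          rw [h3.1] at this
          exact huu (by simpa using this.symm)
    · -- target j ≠ l
      obtain ⟨s, t, hsplit⟩ := List.append_of_mem hl_p₁
      have hR : IsPath X.E l j (l :: t) := path_suffix' (hsplit ▸ hp₁)
      have hRsub : ∀ x ∈ l :: t, x ∈ p₁ := by
        intro x hx; rw [hsplit]; exact List.mem_append_right _ hx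
      have hi₀R : i₀ ∉ l :: t := by
        intro hmem
        cases s with
        | nil =>
          have : l = i₀ := by
            have := hp₁.2.1; rw [hsplit] at this; simpa using this
          exact hlne_i₀ this
        | cons s0 s' =>
          have hs0 : s0 = i₀ := by
            have := hp₁.2.1; rw [hsplit] at this; simpa using this
          have hnd := hp₁.2.2.2.1
          rw [hsplit] at hnd
          exact (List.disjoint_of_nodup_append hnd) (by rw [← hs0]; exact List.mem_cons_self) hmem
      have hdisjS : ∀ x ∈ S, x ∉ l :: t := by
        intro x hxS hxR
        exact hnoLu' (reaches_trans (reaches_of_mem_left hR hxR)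
          (reaches_of_mem_right hSp hxS))
      obtain ⟨P₀, hP₀⟩ := X.reach i₀
      obtain ⟨Q, hQ, hQsub⟩ := walk_dedup
        (walk_append (isWalk_of_isPath hP₀) (isWalk_of_isPath hp₂))
      have hQsub' : ∀ x ∈ Q, x ∈ P₀ ∨ x ∈ p₂ := by
        intro x hx
        rcases List.mem_append.1 (hQsub x hx) with h | h
        · exact Or.inl h
        · exact Or.inr ((List.tail_sublist p₂).subset h)
      have hno : ∀ x, x ∈ p₁ → x ≠ i₀ → x ∉ P₀ := by
        intro x hx hxi hxP
        exact no_cycle X hxi (reaches_of_mem_right hP₀ hxP)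
          (reaches_of_mem_left hp₁ hx)
      have hlQ : l ∉ Q := by
        intro hmem
        rcases hQsub' l hmem with h | h
        · exact hno l hl_p₁ hlne_i₀ h
        · rcases hdisj12 l hl_p₁ h with h' | h'
          · exact hlne_i₀ h'
          · exact hlj h'
      refine master S (l :: t) Q hSp hR he' hdisjS hQ ?_ ?_ ?_
      · exact ⟨X.root, hroot_S, head_mem_of_path hQ⟩
      · intro x hxQ hxR
        have hxp₁ : x ∈ p₁ := hRsub x hxR
        have hxi : x ≠ i₀ := fun hhh => hi₀R (hhh ▸ hxR)
        rcases hQsub' x hxQ with h | h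
        · exact absurd h (hno x hxp₁ hxi)
        · rcases hdisj12 x hxp₁ h with h' | h'
          · exact absurd h' hxi
          · exact h'
      · intro hmem
        exact hlQ ((List.tail_sublist Q).subset (mem_of_mem_pathEdges hmem).2)
  rcases hlab with ⟨i₀, p₁, p₂, hconf, hmem | hmem⟩
  · exact main i₀ p₁ p₂ hconf hmem
  · exact main i₀ p₂ p₁ (conf_symm hconf) hmem

end Aux

/-- Any two incoming edges of a vertex `l` of an extraction order carry
the same label sets. -/
theorem stmt1 {V : Type*} (X : ExtractionOrder V) (l u u' : V)
    (he : (u, l) ∈ X.E) (he' : (u', l) ∈ X.E) :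
    ∀ j : V, IsLabeled X.E (u, l) j ↔ IsLabeled X.E (u', l) j := by
  intro j
  exact ⟨Aux.key X l u u' he he' j, Aux.key X l u' u he' he j⟩
end

section
/- Let Ḡ = (V̄, Ē) be a connected undirected graph, and construct the directed graph G_VC on vertex set V̄ ∪ {r̂} with edge set consisting of one orientation of each edge of Ē plus edges (r̂, i) for every i ∈ V̄. Then the minimum width over all extraction orders of G_VC rooted at r̂ equals the size of a minimum vertex cover of Ḡ plus one. -/
/-- A vertex cover of an undirected graph. -/
def IsVertexCover {V : Type*} (G : SimpleGraph V) (S : Finset V) : Prop :=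
  ∀ u v : V, G.Adj u v → u ∈ S ∨ v ∈ S

/-- The size of a minimum vertex cover. -/
noncomputable def minVertexCover {V : Type*} (G : SimpleGraph V) : ℕ :=
  sInf {k | ∃ S : Finset V, IsVertexCover G S ∧ S.card = k}

/-- The directed graph `G_VC`: one orientation of each edge of `G` plus an edge from the
extra root `none` to every original vertex. -/
def GVC {V : Type*} [Fintype V] [LinearOrder V] (G : SimpleGraph V) [DecidableRel G.Adj] :
    Finset (Option V × Option V) :=
  (((Finset.univ : Finset (V × V)).filter
      (fun p => p.1 < p.2 ∧ G.Adj p.1 p.2)).image (fun p => (some p.1, some p.2))) ∪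
  (Finset.univ.image fun i : V => ((none : Option V), some i))

lemma pathEdges_cons_cons {V : Type*} (a b : V) (l : List V) :
    pathEdges (a :: b :: l) = (a, b) :: pathEdges (b :: l) := rfl

lemma isPath_singleton {V : Type*} (E : Finset (V × V)) (a : V) : IsPath E a a [a] := by
  refine ⟨by simp, by simp, by simp, by simp, by simp [pathEdges]⟩

lemma isPath_pair {V : Type*} {E : Finset (V × V)} {a b : V} (h : (a, b) ∈ E) (hne : a ≠ b) :
    IsPath E a b [a, b] := by
  refine ⟨by simp, by simp, by simp, by simp [hne], ?_⟩
  simp [pathEdges, h]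

lemma isPath_triple {V : Type*} {E : Finset (V × V)} {a b c : V} (h1 : (a, b) ∈ E)
    (h2 : (b, c) ∈ E) (hab : a ≠ b) (hac : a ≠ c) (hbc : b ≠ c) :
    IsPath E a c [a, b, c] := by
  refine ⟨by simp, by simp, by simp, by simp [hab, hac, hbc], ?_⟩
  intro e he
  simp [pathEdges] at he
  rcases he with rfl | rfl
  · exact h1
  · exact h2

lemma isPath_cons {V : Type*} {E : Finset (V × V)} {a b c : V} {l : List V}
    (h : IsPath E a c (a :: b :: l)) : IsPath E b c (b :: l) ∧ (a, b) ∈ E ∧ a ∉ b :: l := by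
  obtain ⟨-, -, hlast, hnd, hE⟩ := h
  refine ⟨⟨by simp, by simp, ?_, hnd.of_cons, ?_⟩, ?_, ?_⟩
  · simpa [List.getLast?] using hlast
  · intro e he; exact hE e (by rw [pathEdges_cons_cons]; exact List.mem_cons_of_mem _ he)
  · exact hE (a, b) (by rw [pathEdges_cons_cons]; exact List.mem_cons_self)
  · exact (List.nodup_cons.mp hnd).1

lemma isPath_mono_le {V : Type*} {E : Finset (V × V)} {f : V → ℕ}
    (hf : ∀ x y : V, (x, y) ∈ E → f x < f y) :
    ∀ (p : List V) (a b : V), IsPath E a b p → f a ≤ f b := by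
  intro p
  induction p with
  | nil => intro a b h; exact absurd rfl h.1
  | cons x l ih =>
    intro a b h
    have hx : x = a := by have := h.2.1; simpa using this
    subst hx
    cases l with
    | nil =>
      have : b = x := by have := h.2.2.1; simpa [List.getLast?] using this.symm
      simp [this]
    | cons y l' =>
      have h' := isPath_cons h
      exact le_of_lt (lt_of_lt_of_le (hf _ _ h'.2.1) (ih y b h'.1))

lemma exists_last_edge {V : Type*} {E : Finset (V × V)} :
    ∀ (p : List V) (a j : V), IsPath E a j p → a ≠ j →
      ∃ x, (x, j) ∈ E ∧ x ∈ p ∧ x ≠ j ∧ (x = a → p = [a, j]) := by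
  intro p
  induction p with
  | nil => intro a j h _; exact absurd rfl h.1
  | cons x l ih =>
    intro a j h hne
    have hx : x = a := by have := h.2.1; simpa using this
    subst hx
    cases l with
    | nil =>
      exfalso; apply hne
      have := h.2.2.1; simpa [List.getLast?] using this
    | cons b l' =>
      have h' := isPath_cons h
      by_cases hbj : b = j
      · have hl' : l' = [] := by
          by_contra hne'
          have hlast : (b :: l').getLast? = some j := h'.1.2.2.1
          have hml : l'.getLast? = some j := by
            cases l' with
            | nil => exact absurd rfl hne'
            | cons c l'' => simpa [List.getLast?_cons_cons] using hlast
          have hjl' : j ∈ l' := by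
            obtain ⟨h0, h1⟩ := List.mem_getLast?_eq_getLast (Option.mem_def.mpr hml)
            exact h1 ▸ List.getLast_mem h0
          exact (List.nodup_cons.mp h'.1.2.2.2.1).1 (hbj ▸ hjl')
        subst hl'
        exact ⟨x, hbj ▸ h'.2.1, by simp, hne, fun _ => by rw [hbj]⟩
      · obtain ⟨y, hyE, hyl, hyj, himp⟩ := ih b j h'.1 hbj
        refine ⟨y, hyE, List.mem_cons_of_mem _ hyl, hyj, ?_⟩
        intro hyx
        exfalso
        exact h'.2.2 (hyx ▸ hyl)

lemma confluence_inneighbors {V : Type*} {E : Finset (V × V)} {i j : V} {p₁ p₂ : List V}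
    (h : IsConfluence E i j p₁ p₂) :
    ∃ x₁ x₂, x₁ ≠ x₂ ∧ (x₁, j) ∈ E ∧ (x₂, j) ∈ E := by
  obtain ⟨hij, hpne, hp₁, hp₂, hdisj⟩ := h
  obtain ⟨x₁, hx₁E, hx₁m, hx₁j, hx₁i⟩ := exists_last_edge p₁ i j hp₁ hij
  obtain ⟨x₂, hx₂E, hx₂m, hx₂j, hx₂i⟩ := exists_last_edge p₂ i j hp₂ hij
  refine ⟨x₁, x₂, ?_, hx₁E, hx₂E⟩
  intro heq
  have : x₁ = i ∨ x₁ = j := hdisj x₁ hx₁m (heq ▸ hx₂m)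
  rcases this with rfl | rfl
  · exact hpne ((hx₁i rfl).trans (hx₂i heq.symm).symm)
  · exact hx₁j rfl


lemma mem_GVC {V : Type*} [Fintype V] [LinearOrder V] {G : SimpleGraph V} [DecidableRel G.Adj]
    {e : Option V × Option V} :
    e ∈ GVC G ↔ (∃ u v : V, u < v ∧ G.Adj u v ∧ e = (some u, some v)) ∨
      ∃ i : V, e = (none, some i) := by
  unfold GVC
  rw [Finset.mem_union]
  simp only [Finset.mem_image, Finset.mem_filter, Finset.mem_univ, true_and, Prod.exists]
  constructor
  · rintro (⟨u, v, ⟨h1, h2⟩, rfl⟩ | ⟨i, rfl⟩)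
    · exact Or.inl ⟨u, v, h1, h2, rfl⟩
    · exact Or.inr ⟨i, rfl⟩
  · rintro (⟨u, v, h1, h2, rfl⟩ | ⟨i, rfl⟩)
    · exact Or.inl ⟨u, v, ⟨h1, h2⟩, rfl⟩
    · exact Or.inr ⟨i, rfl⟩

def coverEdges {V : Type*} [Fintype V] [LinearOrder V] (G : SimpleGraph V) [DecidableRel G.Adj]
    (S : Finset V) : Finset (Option V × Option V) :=
  (Finset.univ.image fun i : V => ((none : Option V), some i)) ∪
  ((Finset.univ.filter (fun p : V × V => G.Adj p.1 p.2 ∧ p.2 ∈ S ∧ (p.1 ∉ S ∨ p.1 < p.2))).image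
     (fun p => (some p.1, some p.2)))

lemma mem_coverEdges {V : Type*} [Fintype V] [LinearOrder V] {G : SimpleGraph V}
    [DecidableRel G.Adj] {S : Finset V} {e : Option V × Option V} :
    e ∈ coverEdges G S ↔ (∃ i : V, e = (none, some i)) ∨
      ∃ u v : V, G.Adj u v ∧ v ∈ S ∧ (u ∉ S ∨ u < v) ∧ e = (some u, some v) := by
  unfold coverEdges
  rw [Finset.mem_union]
  simp only [Finset.mem_image, Finset.mem_filter, Finset.mem_univ, true_and, Prod.exists]
  constructor
  · rintro (⟨i, rfl⟩ | ⟨u, v, ⟨h1, h2, h3⟩, rfl⟩)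
    · exact Or.inl ⟨i, rfl⟩
    · exact Or.inr ⟨u, v, h1, h2, h3, rfl⟩
  · rintro (⟨i, rfl⟩ | ⟨u, v, h1, h2, h3, rfl⟩)
    · exact Or.inl ⟨i, rfl⟩
    · exact Or.inr ⟨u, v, ⟨h1, h2, h3⟩, rfl⟩

noncomputable def rankF {V : Type*} [Fintype V] [LinearOrder V] (S : Finset V) : Option V → ℕ
  | none => 0
  | some v => if v ∈ S then 2 + (Finset.univ.filter (· < v)).card else 1

lemma rankF_lt {V : Type*} [Fintype V] [LinearOrder V] {G : SimpleGraph V} [DecidableRel G.Adj]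
    {S : Finset V} : ∀ x y : Option V, (x, y) ∈ coverEdges G S → rankF S x < rankF S y := by
  intro x y hxy
  rcases mem_coverEdges.mp hxy with ⟨i, he⟩ | ⟨u, v, hadj, hvS, hd, he⟩
  · obtain ⟨rfl, rfl⟩ := Prod.mk.injEq .. ▸ (Prod.ext_iff.mp he)
    simp only [rankF]
    split <;> omega
  · obtain ⟨rfl, rfl⟩ := Prod.mk.injEq .. ▸ (Prod.ext_iff.mp he)
    simp only [rankF, if_pos hvS]
    by_cases huS : u ∈ S
    · rw [if_pos huS]
      have hlt : u < v := hd.resolve_left (fun h => h huS)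
      have : (Finset.univ.filter (· < u)).card < (Finset.univ.filter (· < v)).card := by
        apply Finset.card_lt_card
        constructor
        · intro z hz
          simp only [Finset.mem_filter, Finset.mem_univ, true_and] at hz ⊢
          exact lt_trans hz hlt
        · intro hsub
          have := hsub (Finset.mem_filter.mpr ⟨Finset.mem_univ u, hlt⟩)
          simp only [Finset.mem_filter, Finset.mem_univ, true_and] at this
          exact lt_irrefl u this
      omega
    · rw [if_neg huS]; omega

noncomputable def coverOrder {V : Type*} [Fintype V] [LinearOrder V] (G : SimpleGraph V)
    [DecidableRel G.Adj] (S : Finset V) : ExtractionOrder (Option V) where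
  E := coverEdges G S
  root := none
  reach := by
    intro v
    cases v with
    | none => exact ⟨[none], isPath_singleton _ _⟩
    | some i =>
      refine ⟨[none, some i], isPath_pair ?_ (by simp)⟩
      exact mem_coverEdges.mpr (Or.inl ⟨i, rfl⟩)
  acyclic := by
    rintro u v huv ⟨p, hp⟩
    have h1 := rankF_lt (G := G) (S := S) u v huv
    have h2 := isPath_mono_le (rankF_lt (G := G) (S := S)) p v u hp
    omega


lemma coverOrder_orientation {V : Type*} [Fintype V] [LinearOrder V] (G : SimpleGraph V)
    [DecidableRel G.Adj] {S : Finset V} (hS : IsVertexCover G S) :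
    IsOrientationOf (coverEdges G S) (GVC G) := by
  constructor
  · intro u v huv
    rcases mem_coverEdges.mp huv with ⟨i, he⟩ | ⟨a, b, hadj, hbS, hd, he⟩
    · simp only [Prod.mk.injEq] at he
      obtain ⟨rfl, rfl⟩ := he
      exact Or.inl (mem_GVC.mpr (Or.inr ⟨i, rfl⟩))
    · simp only [Prod.mk.injEq] at he
      obtain ⟨rfl, rfl⟩ := he
      rcases lt_trichotomy a b with hlt | rfl | hlt
      · exact Or.inl (mem_GVC.mpr (Or.inl ⟨a, b, hlt, hadj, rfl⟩))
      · exact absurd rfl hadj.ne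
      · exact Or.inr (mem_GVC.mpr (Or.inl ⟨b, a, hlt, hadj.symm, rfl⟩))
  · intro u v huv
    rcases mem_GVC.mp huv with ⟨a, b, hlt, hadj, he⟩ | ⟨i, he⟩
    · simp only [Prod.mk.injEq] at he
      obtain ⟨rfl, rfl⟩ := he
      by_cases hbS : b ∈ S
      · exact Or.inl (mem_coverEdges.mpr (Or.inr ⟨a, b, hadj, hbS, Or.inr hlt, rfl⟩))
      · have haS : a ∈ S := (hS a b hadj).resolve_right hbS
        exact Or.inr (mem_coverEdges.mpr (Or.inr ⟨b, a, hadj.symm, haS, Or.inl hbS, rfl⟩))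
    · simp only [Prod.mk.injEq] at he
      obtain ⟨rfl, rfl⟩ := he
      exact Or.inl (mem_coverEdges.mpr (Or.inl ⟨i, rfl⟩))

lemma labeled_coverEdges_mem {V : Type*} [Fintype V] [LinearOrder V] {G : SimpleGraph V}
    [DecidableRel G.Adj] {S : Finset V} {e : Option V × Option V} {j : Option V}
    (h : IsLabeled (coverEdges G S) e j) : ∃ v ∈ S, j = some v := by
  obtain ⟨i, p₁, p₂, hc, -⟩ := h
  obtain ⟨x₁, x₂, hne, h₁, h₂⟩ := confluence_inneighbors hc
  rcases mem_coverEdges.mp h₁ with ⟨i₁, he₁⟩ | ⟨u, v, _, hvS, _, he⟩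
  swap
  · simp only [Prod.mk.injEq] at he; exact ⟨v, hvS, he.2⟩
  rcases mem_coverEdges.mp h₂ with ⟨i₂, he₂⟩ | ⟨u, v, _, hvS, _, he⟩
  swap
  · simp only [Prod.mk.injEq] at he; exact ⟨v, hvS, he.2⟩
  · simp only [Prod.mk.injEq] at he₁ he₂
    exact absurd (he₁.1.trans he₂.1.symm) hne

lemma width_coverOrder_le {V : Type*} [Fintype V] [LinearOrder V] (G : SimpleGraph V)
    [DecidableRel G.Adj] (S : Finset V) : widthX (coverOrder G S) ≤ 1 + S.card := by
  unfold widthX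
  refine Nat.add_le_add_left ?_ 1
  apply Finset.sup_le
  intro e _
  have hsub : bagLabels (coverEdges G S) e ⊆ (fun v : V => (some v : Option V)) '' ↑S := by
    rintro j ⟨e', -, hlab⟩
    obtain ⟨v, hvS, rfl⟩ := labeled_coverEdges_mem hlab
    exact ⟨v, hvS, rfl⟩
  calc (bagLabels (coverOrder G S).E e).ncard
      ≤ ((fun v : V => (some v : Option V)) '' ↑S).ncard :=
        Set.ncard_le_ncard hsub (Set.toFinite _)
    _ = (↑S : Set V).ncard := Set.ncard_image_of_injective _ (Option.some_injective V)
    _ = S.card := Set.ncard_coe_finset S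


lemma lower_bound {V : Type*} [Fintype V] [LinearOrder V] (G : SimpleGraph V)
    [DecidableRel G.Adj] (hconn : G.Connected) (X : ExtractionOrder (Option V))
    (horient : IsOrientationOf X.E (GVC G)) (hroot : X.root = (none : Option V)) :
    minVertexCover G + 1 ≤ widthX X := by
  classical
  -- all root edges are present and oriented away from the root
  have hre : ∀ i : V, ((none : Option V), some i) ∈ X.E := by
    intro i
    rcases horient.2 none (some i) (mem_GVC.mpr (Or.inr ⟨i, rfl⟩)) with h | h
    · exact h
    · exfalso
      obtain ⟨p, hp⟩ := X.reach (some i)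
      rw [hroot] at hp
      exact X.acyclic (some i) none h ⟨p, hp⟩
  -- edges between original vertices correspond to adjacencies
  have hadj_of_mem : ∀ a b : V, ((some a : Option V), some b) ∈ X.E → G.Adj a b := by
    intro a b h
    rcases horient.1 (some a) (some b) h with h' | h'
    · rcases mem_GVC.mp h' with ⟨u, v, _, hadj, he⟩ | ⟨i, he⟩
      · simp only [Prod.mk.injEq, Option.some.injEq] at he
        obtain ⟨rfl, rfl⟩ := he
        exact hadj
      · simp at he
    · rcases mem_GVC.mp h' with ⟨u, v, _, hadj, he⟩ | ⟨i, he⟩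
      · simp only [Prod.mk.injEq, Option.some.injEq] at he
        obtain ⟨rfl, rfl⟩ := he
        exact hadj.symm
      · simp at he
  -- labels produced by an oriented edge
  have hlab2 : ∀ a b : V, ((some a : Option V), some b) ∈ X.E →
      IsLabeled X.E ((none : Option V), some a) (some b) ∧
      IsLabeled X.E ((none : Option V), some b) (some b) := by
    intro a b h
    have hab : a ≠ b := (hadj_of_mem a b h).ne
    have hconf : IsConfluence X.E (none : Option V) (some b)
        [none, some b] [none, some a, some b] := by
      refine ⟨by simp, by simp, isPath_pair (hre b) (by simp),
        isPath_triple (hre a) h (by simp) (by simp) (by simp [hab]), ?_⟩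
      intro v hv _
      simp only [List.mem_cons, List.not_mem_nil, or_false] at hv
      tauto
    constructor
    · exact ⟨none, _, _, hconf, Or.inr (by simp [pathEdges])⟩
    · exact ⟨none, _, _, hconf, Or.inl (by simp [pathEdges])⟩
  -- each undirected edge is oriented one way or the other
  have hdir : ∀ a b : V, G.Adj a b →
      ((some a : Option V), some b) ∈ X.E ∨ ((some b : Option V), some a) ∈ X.E := by
    intro a b hadj
    rcases lt_trichotomy a b with hlt | rfl | hlt
    · rcases horient.2 (some a) (some b) (mem_GVC.mpr (Or.inl ⟨a, b, hlt, hadj, rfl⟩)) with h | h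
      · exact Or.inl h
      · exact Or.inr h
    · exact absurd rfl hadj.ne
    · rcases horient.2 (some b) (some a)
        (mem_GVC.mpr (Or.inl ⟨b, a, hlt, hadj.symm, rfl⟩)) with h | h
      · exact Or.inr h
      · exact Or.inl h
  -- adjacent vertices give root edges with intersecting label sets
  have hstep : ∀ a b : V, G.Adj a b →
      (labelSet X.E ((none : Option V), some a) ∩
        labelSet X.E ((none : Option V), some b)).Nonempty := by
    intro a b hadj
    rcases hdir a b hadj with h | h
    · exact ⟨some b, (hlab2 a b h).1, (hlab2 a b h).2⟩
    · exact ⟨some a, (hlab2 b a h).2, (hlab2 b a h).1⟩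
  have hV : Nonempty V := hconn.nonempty
  obtain ⟨v₀⟩ := hV
  set e₀ : Option V × Option V := ((none : Option V), some v₀) with he₀
  -- all root edges are in the same bag
  have hchain : ∀ v : V, inSameBag X.E e₀ ((none : Option V), some v) := by
    have key : ∀ (x y : V) (w : G.Walk x y), inSameBag X.E e₀ ((none : Option V), some x) →
        inSameBag X.E e₀ ((none : Option V), some y) := by
      intro x y w
      induction w with
      | nil => exact id
      | cons h p ih =>
        intro hx
        apply ih
        exact Relation.ReflTransGen.tail hx ⟨hre _, hre _, rfl, rfl, hstep _ _ h⟩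
    intro v
    obtain ⟨w⟩ := hconn v₀ v
    exact key v₀ v w Relation.ReflTransGen.refl
  -- the set of heads of oriented edges
  set T : Finset V := Finset.univ.filter
    (fun v : V => ∃ u : V, ((some u : Option V), some v) ∈ X.E) with hT
  have hTcover : IsVertexCover G T := by
    intro u v hadj
    rcases hdir u v hadj with h | h
    · exact Or.inr (Finset.mem_filter.mpr ⟨Finset.mem_univ v, u, h⟩)
    · exact Or.inl (Finset.mem_filter.mpr ⟨Finset.mem_univ u, v, h⟩)
  have hTsub : (fun v : V => (some v : Option V)) '' ↑T ⊆ bagLabels X.E e₀ := by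
    rintro j ⟨v, hvT, rfl⟩
    obtain ⟨-, u, hu⟩ := Finset.mem_filter.mp hvT
    exact ⟨((none : Option V), some v), hchain v, (hlab2 u v hu).2⟩
  have hcard : T.card ≤ (bagLabels X.E e₀).ncard := by
    calc T.card = (↑T : Set V).ncard := (Set.ncard_coe_finset T).symm
      _ = ((fun v : V => (some v : Option V)) '' ↑T).ncard :=
          (Set.ncard_image_of_injective _ (Option.some_injective V)).symm
      _ ≤ (bagLabels X.E e₀).ncard := Set.ncard_le_ncard hTsub (Set.toFinite _)
  have hmin : minVertexCover G ≤ T.card := Nat.sInf_le ⟨T, hTcover, rfl⟩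
  have hsup : (bagLabels X.E e₀).ncard ≤ X.E.sup (fun e => (bagLabels X.E e).ncard) := by
    rw [he₀]
    exact Finset.le_sup (f := fun e => (bagLabels X.E e).ncard) (hre v₀)
  unfold widthX
  omega

/-- For a connected graph `G`, the minimum width over all extraction orders
of `G_VC` rooted at the extra root equals the size of a minimum vertex cover plus one. -/
theorem stmt6 {V : Type*} [Fintype V] [LinearOrder V] (G : SimpleGraph V)
    [DecidableRel G.Adj] (hconn : G.Connected) :
    sInf {w | ∃ X : ExtractionOrder (Option V),
        IsOrientationOf X.E (GVC G) ∧ X.root = (none : Option V) ∧ widthX X = w}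
      = minVertexCover G + 1 := by
  classical
  have hne : {k | ∃ S : Finset V, IsVertexCover G S ∧ S.card = k}.Nonempty :=
    ⟨Finset.univ.card, Finset.univ, fun u v _ => Or.inl (Finset.mem_univ u), rfl⟩
  obtain ⟨S, hScov, hScard⟩ : ∃ S : Finset V, IsVertexCover G S ∧ S.card = minVertexCover G :=
    Nat.sInf_mem hne
  have hlow : ∀ w ∈ {w | ∃ X : ExtractionOrder (Option V),
      IsOrientationOf X.E (GVC G) ∧ X.root = (none : Option V) ∧ widthX X = w},
      minVertexCover G + 1 ≤ w := by
    rintro w ⟨X, horient, hroot, rfl⟩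
    exact lower_bound G hconn X horient hroot
  have hmem : widthX (coverOrder G S) ∈ {w | ∃ X : ExtractionOrder (Option V),
      IsOrientationOf X.E (GVC G) ∧ X.root = (none : Option V) ∧ widthX X = w} :=
    ⟨coverOrder G S, coverOrder_orientation G hScov, rfl, rfl⟩
  have hup : widthX (coverOrder G S) ≤ minVertexCover G + 1 := by
    have := width_coverOrder_le G S
    omega
  have heq : widthX (coverOrder G S) = minVertexCover G + 1 :=
    le_antisymm hup (hlow _ hmem)
  exact le_antisymm (heq ▸ Nat.sInf_le hmem) (le_csInf ⟨_, hmem⟩ hlow)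
end

section
/- Let {A_r}_{r∈R} be independent random variables with A_r ∈ [0, M_r] for constants M_r > 0, and let A = Σ_r A_r with E[A] ≤ d for some d > 0. Suppose 0 < ε ≤ 1 and constants m_r > 0 satisfy m_r ≤ ε·d and M_r/m_r well-defined; let Δ = Σ_r (M_r/m_r)² and n ≥ 3. Then P(A ≥ (1 + ε·√(2·Δ·log n))·d) ≤ n^{−4}. -/
open MeasureTheory ProbabilityTheory

open Real

lemma hoeffding_scalar {p : ℝ} (hp0 : 0 ≤ p) (hp1 : p ≤ 1) (h : ℝ) :
    (1 - p + p * Real.exp h) * Real.exp (-(p * h)) ≤ Real.exp (h ^ 2 / 8) := by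
  set φ : ℝ → ℝ := fun x => 1 - p + p * Real.exp x with hφdef
  have hφpos : ∀ x, 0 < φ x := by
    intro x
    rcases hp0.eq_or_lt with hp | hp
    · simp [hφdef, ← hp]
    · have : 0 < p * Real.exp x := mul_pos hp (Real.exp_pos x)
      simp only [hφdef]; linarith
  set u : ℝ → ℝ := fun x => p * Real.exp x / φ x with hudef
  have hu0 : ∀ x, 0 ≤ u x := fun x =>
    div_nonneg (mul_nonneg hp0 (Real.exp_pos x).le) (hφpos x).le
  have hu1 : ∀ x, u x ≤ 1 := by
    intro x
    rw [hudef, div_le_one (hφpos x)]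
    simp only [hφdef]; linarith
  set g : ℝ → ℝ := fun x => x ^ 2 / 8 + p * x - Real.log (φ x) with hgdef
  set g1 : ℝ → ℝ := fun x => x / 4 + p - p * Real.exp x / φ x with hg1def
  have hφder : ∀ x, HasDerivAt φ (p * Real.exp x) x := by
    intro x
    exact ((Real.hasDerivAt_exp x).const_mul p).const_add (1 - p)
  have hder_g : ∀ x, HasDerivAt g (g1 x) x := by
    intro x
    have h1 : HasDerivAt (fun x : ℝ => x ^ 2 / 8 + p * x) (x / 4 + p) x := by
      have := ((hasDerivAt_pow 2 x).div_const 8).add ((hasDerivAt_id x).const_mul p)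
      refine this.congr_deriv ?_
      push_cast
      ring
    have hlog : HasDerivAt (fun x => Real.log (φ x)) (p * Real.exp x / φ x) x :=
      (hφder x).log (hφpos x).ne'
    exact h1.sub hlog
  have hder_g1 : ∀ x, HasDerivAt g1 (1 / 4 - u x * (1 - u x)) x := by
    intro x
    have h1 : HasDerivAt (fun x : ℝ => x / 4 + p) (1 / 4) x := by
      simpa using ((hasDerivAt_id x).div_const 4).add_const p
    have h2 : HasDerivAt (fun x => p * Real.exp x / φ x)
        ((p * Real.exp x * φ x - p * Real.exp x * (p * Real.exp x)) / φ x ^ 2) x :=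
      ((Real.hasDerivAt_exp x).const_mul p).div (hφder x) (hφpos x).ne'
    have := h1.sub h2
    refine this.congr_deriv ?_
    have hne := (hφpos x).ne'
    simp only [u]
    field_simp
  have hg2 : ∀ x, 0 ≤ 1 / 4 - u x * (1 - u x) := by
    intro x
    nlinarith [sq_nonneg (1 - 2 * u x)]
  have hg1mono : Monotone g1 :=
    monotone_of_deriv_nonneg (fun x => (hder_g1 x).differentiableAt)
      (fun x => by rw [(hder_g1 x).deriv]; exact hg2 x)
  have hφ0 : φ 0 = 1 := by simp [hφdef]
  have hg10 : g1 0 = 0 := by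
    simp only [hg1def, hφ0, Real.exp_zero]
    ring
  have hdiffg : Differentiable ℝ g := fun x => (hder_g x).differentiableAt
  have hg0 : g 0 = 0 := by simp [hgdef, hφ0]
  have hkey : ∀ x, 0 ≤ g x := by
    intro x
    rcases le_total 0 x with hx | hx
    · have hmono : MonotoneOn g (Set.Ici 0) :=
        monotoneOn_of_deriv_nonneg (convex_Ici 0) hdiffg.continuous.continuousOn
          hdiffg.differentiableOn
          (fun y hy => by
            rw [(hder_g y).deriv]
            have hy0 : (0 : ℝ) ≤ y := le_of_lt (by simpa using hy)
            rw [← hg10]; exact hg1mono hy0)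
      have := hmono Set.self_mem_Ici (Set.mem_Ici.mpr hx) hx
      rwa [hg0] at this
    · have hanti : AntitoneOn g (Set.Iic 0) :=
        antitoneOn_of_deriv_nonpos (convex_Iic 0) hdiffg.continuous.continuousOn
          hdiffg.differentiableOn
          (fun y hy => by
            rw [(hder_g y).deriv]
            have hy0 : y ≤ (0 : ℝ) := le_of_lt (by simpa using hy)
            rw [← hg10]; exact hg1mono hy0)
      have := hanti (Set.mem_Iic.mpr hx) Set.self_mem_Iic hx
      rwa [hg0] at this
  have hlogle : Real.log (φ h) ≤ h ^ 2 / 8 + p * h := by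
    have := hkey h
    simp only [hgdef] at this
    linarith
  have hφle : φ h ≤ Real.exp (h ^ 2 / 8 + p * h) := by
    calc φ h = Real.exp (Real.log (φ h)) := (Real.exp_log (hφpos h)).symm
    _ ≤ _ := Real.exp_le_exp.mpr hlogle
  calc (1 - p + p * Real.exp h) * Real.exp (-(p * h))
      = φ h * Real.exp (-(p * h)) := rfl
    _ ≤ Real.exp (h ^ 2 / 8 + p * h) * Real.exp (-(p * h)) :=
        mul_le_mul_of_nonneg_right hφle (Real.exp_pos _).le
    _ = Real.exp (h ^ 2 / 8) := by rw [← Real.exp_add]; ring_nf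


lemma bdd_integrable {Ω : Type*} [MeasurableSpace Ω] (μ : Measure Ω) [IsFiniteMeasure μ]
    {f : Ω → ℝ} (hf : Measurable f) {C : ℝ} (h : ∀ ω, |f ω| ≤ C) : Integrable f μ :=
  (integrable_const C).mono' hf.aestronglyMeasurable
    (Filter.Eventually.of_forall (by simpa [Real.norm_eq_abs] using h))

lemma mgf_single {Ω : Type*} [MeasurableSpace Ω] (μ : Measure Ω) [IsProbabilityMeasure μ]
    {A : Ω → ℝ} (hA : Measurable A) {M : ℝ} (hM : 0 < M)
    (hr : ∀ ω, A ω ∈ Set.Icc (0 : ℝ) M) (s : ℝ) :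
    mgf (fun ω => A ω - ∫ ω, A ω ∂μ) μ s ≤ Real.exp (s ^ 2 * M ^ 2 / 8) := by
  have hintA : Integrable A μ :=
    bdd_integrable μ hA (C := M) (fun ω => by
      have := hr ω; rw [abs_le]; constructor <;> [linarith [this.1]; exact this.2])
  set EA : ℝ := ∫ ω, A ω ∂μ with hEA
  have hEA0 : 0 ≤ EA := integral_nonneg (fun ω => (hr ω).1)
  have hEAM : EA ≤ M := by
    calc EA ≤ ∫ _, M ∂μ := integral_mono hintA (integrable_const M) (fun ω => (hr ω).2)
    _ = M := by simp
  set p : ℝ := EA / M with hp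
  have hp0 : 0 ≤ p := div_nonneg hEA0 hM.le
  have hp1 : p ≤ 1 := (div_le_one hM).mpr hEAM
  -- integrability of exp (s * A)
  have hintexp : Integrable (fun ω => Real.exp (s * A ω)) μ := by
    refine bdd_integrable μ (by measurability) (C := Real.exp (|s| * M)) (fun ω => ?_)
    rw [abs_of_nonneg (Real.exp_pos _).le, Real.exp_le_exp]
    have h1 := (hr ω).1; have h2 := (hr ω).2
    calc s * A ω ≤ |s| * A ω := mul_le_mul_of_nonneg_right (le_abs_self s) h1
    _ ≤ |s| * M := mul_le_mul_of_nonneg_left h2 (abs_nonneg s)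
  -- pointwise convexity bound
  have hpt : ∀ ω, Real.exp (s * A ω) ≤ 1 + ((Real.exp (s * M) - 1) / M) * A ω := by
    intro ω
    have h1 := (hr ω).1; have h2 := (hr ω).2
    set q : ℝ := A ω / M with hq
    have hq0 : 0 ≤ q := div_nonneg h1 hM.le
    have hq1 : q ≤ 1 := (div_le_one hM).mpr h2
    have hconv := convexOn_exp.2 (Set.mem_univ (0 : ℝ)) (Set.mem_univ (s * M))
      (by linarith : (0:ℝ) ≤ 1 - q) hq0 (by ring)
    have hqA : q * M = A ω := by rw [hq, div_mul_cancel₀ _ hM.ne']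
    have harg : (1 - q) • (0 : ℝ) + q • (s * M) = s * A ω := by
      rw [smul_eq_mul, smul_eq_mul, ← hqA]; ring
    rw [harg] at hconv
    simp only [smul_eq_mul, Real.exp_zero, mul_one] at hconv
    have heq : (1 - q) * 1 + q * Real.exp (s * M) = 1 + ((Real.exp (s * M) - 1) / M) * A ω := by
      rw [← hqA]; field_simp; ring
    linarith [hconv, heq.le, heq.ge]
  -- integral bound
  have hintRHS : Integrable (fun ω => 1 + ((Real.exp (s * M) - 1) / M) * A ω) μ :=
    (integrable_const 1).add (hintA.const_mul _)
  have hIbound : ∫ ω, Real.exp (s * A ω) ∂μ ≤ 1 - p + p * Real.exp (s * M) := by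
    calc ∫ ω, Real.exp (s * A ω) ∂μ
        ≤ ∫ ω, (1 + ((Real.exp (s * M) - 1) / M) * A ω) ∂μ :=
          integral_mono hintexp hintRHS hpt
      _ = 1 + ((Real.exp (s * M) - 1) / M) * EA := by
          rw [integral_add (integrable_const 1) (hintA.const_mul _), integral_const,
            integral_const_mul]
          simp [hEA]
      _ = 1 - p + p * Real.exp (s * M) := by
          rw [hp]; field_simp; ring
  -- assemble
  have hmgf : mgf (fun ω => A ω - EA) μ s
      = (∫ ω, Real.exp (s * A ω) ∂μ) * Real.exp (-(s * EA)) := by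
    rw [mgf, ← integral_mul_const]
    congr 1 with ω
    rw [← Real.exp_add]; ring_nf
  rw [hmgf]
  have hsEA : s * EA = p * (s * M) := by rw [hp]; field_simp
  calc (∫ ω, Real.exp (s * A ω) ∂μ) * Real.exp (-(s * EA))
      ≤ (1 - p + p * Real.exp (s * M)) * Real.exp (-(p * (s * M))) := by
        rw [hsEA]
        exact mul_le_mul_of_nonneg_right hIbound (Real.exp_pos _).le
    _ ≤ Real.exp ((s * M) ^ 2 / 8) := hoeffding_scalar hp0 hp1 (s * M)
    _ = Real.exp (s ^ 2 * M ^ 2 / 8) := by ring_nf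


/-- Hoeffding-type capacity violation bound (profit variant).  For
independent allocations `A r ∈ [0, M r]` with `E[Σ A r] ≤ d`, demands `m r ≤ ε·d`
(`0 < ε ≤ 1`), `Δ = Σ (M r / m r)²` and `n ≥ 3`,
`P(Σ A r ≥ (1 + ε·√(2·Δ·log n))·d) ≤ n⁻⁴`. -/
theorem stmt11 {Ω : Type*} [MeasurableSpace Ω] (μ : Measure Ω) [IsProbabilityMeasure μ]
    {ι : Type*} (R : Finset ι) (A : ι → Ω → ℝ) (M m : ι → ℝ) (d ε : ℝ) (n : ℕ)
    (hmeas : ∀ r, Measurable (A r))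
    (hindep : iIndepFun A μ)
    (hrange : ∀ r ∈ R, ∀ ω, A r ω ∈ Set.Icc (0 : ℝ) (M r))
    (hM : ∀ r ∈ R, 0 < M r) (hm : ∀ r ∈ R, 0 < m r)
    (hd : 0 < d)
    (hE : ∫ ω, (∑ r ∈ R, A r ω) ∂μ ≤ d)
    (hε : 0 < ε) (hε1 : ε ≤ 1)
    (hmd : ∀ r ∈ R, m r ≤ ε * d)
    (hn : 3 ≤ n) :
    μ {ω | (1 + ε * Real.sqrt (2 * (∑ r ∈ R, (M r / m r) ^ 2) * Real.log n)) * d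
        ≤ ∑ r ∈ R, A r ω}
      ≤ ((n : ENNReal) ^ 4)⁻¹ := by
  classical
  rcases R.eq_empty_or_nonempty with hRe | hR
  · have : {ω | (1 + ε * Real.sqrt (2 * (∑ r ∈ R, (M r / m r) ^ 2) * Real.log n)) * d
        ≤ ∑ r ∈ R, A r ω} = ∅ := by
      ext ω
      simp only [Set.mem_setOf_eq, Set.mem_empty_iff_false, iff_false, not_le, hRe]
      simp [hRe]
      nlinarith
    rw [this]
    simp
  have hn1 : (1 : ℝ) ≤ (n : ℝ) := by exact_mod_cast (by omega : 1 ≤ n)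
  have hnpos : (0 : ℝ) < n := by linarith
  have hlogn : 0 ≤ Real.log n := Real.log_nonneg hn1
  set Δ : ℝ := ∑ r ∈ R, (M r / m r) ^ 2 with hΔdef
  have hΔpos : 0 < Δ :=
    Finset.sum_pos (fun r hr => pow_pos (div_pos (hM r hr) (hm r hr)) 2) hR
  set c : ℝ := ε * Real.sqrt (2 * Δ * Real.log n) with hcdef
  have hc0 : 0 ≤ c := mul_nonneg hε.le (Real.sqrt_nonneg _)
  set t : ℝ := c * d with htdef
  have ht0 : 0 ≤ t := mul_nonneg hc0 hd.le
  have hintA : ∀ r ∈ R, Integrable (A r) μ := fun r hr =>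
    bdd_integrable μ (hmeas r) (C := M r) (fun ω => by
      have h1 := (hrange r hr ω).1; have h2 := (hrange r hr ω).2
      rw [abs_le]; exact ⟨by linarith, h2⟩)
  set EA : ι → ℝ := fun r => ∫ ω, A r ω ∂μ with hEAdef
  set E : ℝ := ∑ r ∈ R, EA r with hEdef
  have hEd : E ≤ d := by
    rw [hEdef, hEAdef, ← integral_finset_sum R hintA]
    exact hE
  set Y : ι → Ω → ℝ := fun r => fun ω => A r ω - EA r with hYdef
  have hYmeas : ∀ r, Measurable (Y r) := fun r => (hmeas r).sub measurable_const
  have hYindep : iIndepFun Y μ :=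
    hindep.comp (fun r x => x - EA r) (fun r => measurable_id.sub measurable_const)
  set X : Ω → ℝ := ∑ r ∈ R, Y r with hXdef
  have hXapp : ∀ ω, X ω = (∑ r ∈ R, A r ω) - E := by
    intro ω
    rw [hXdef, Finset.sum_apply, hEdef, ← Finset.sum_sub_distrib]
  have hXmeas : Measurable X := by
    have : X = fun ω => ∑ r ∈ R, Y r ω := by
      funext ω; rw [hXdef, Finset.sum_apply]
    rw [this]
    exact Finset.measurable_sum R (fun r _ => hYmeas r)
  -- bounds on EA, Y
  have hEA0 : ∀ r ∈ R, 0 ≤ EA r := fun r hr => integral_nonneg (fun ω => (hrange r hr ω).1)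
  have hEAM : ∀ r ∈ R, EA r ≤ M r := fun r hr => by
    calc EA r ≤ ∫ _, M r ∂μ :=
      integral_mono (hintA r hr) (integrable_const _) (fun ω => (hrange r hr ω).2)
    _ = M r := by simp
  set V : ℝ := ∑ r ∈ R, M r ^ 2 with hVdef
  have hVpos : 0 < V := Finset.sum_pos (fun r hr => pow_pos (hM r hr) 2) hR
  set s : ℝ := 4 * t / V with hsdef
  have hs0 : 0 ≤ s := by positivity
  -- integrability of exp (s * X)
  have hXbdd : ∀ ω, |X ω| ≤ (∑ r ∈ R, M r) + |E| := by
    intro ω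
    rw [hXapp ω]
    have h1 : |∑ r ∈ R, A r ω| ≤ ∑ r ∈ R, M r := by
      refine (Finset.abs_sum_le_sum_abs _ _).trans (Finset.sum_le_sum (fun r hr => ?_))
      rw [abs_of_nonneg (hrange r hr ω).1]; exact (hrange r hr ω).2
    calc |(∑ r ∈ R, A r ω) - E| ≤ |∑ r ∈ R, A r ω| + |E| := abs_sub _ _
    _ ≤ _ := by linarith
  have hXint : Integrable (fun ω => Real.exp (s * X ω)) μ := by
    refine bdd_integrable μ ((measurable_const.mul hXmeas).exp)
      (C := Real.exp (|s| * ((∑ r ∈ R, M r) + |E|))) (fun ω => ?_)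
    rw [abs_of_nonneg (Real.exp_pos _).le, Real.exp_le_exp]
    calc s * X ω ≤ |s * X ω| := le_abs_self _
    _ = |s| * |X ω| := abs_mul _ _
    _ ≤ |s| * ((∑ r ∈ R, M r) + |E|) :=
        mul_le_mul_of_nonneg_left (hXbdd ω) (abs_nonneg s)
  -- Chernoff
  have hcher := measure_ge_le_exp_mul_mgf (X := X) (μ := μ) (t := s) t hs0 hXint
  -- mgf bound
  have hmgfbd : mgf X μ s ≤ Real.exp (s ^ 2 * V / 8) := by
    rw [hXdef, hYindep.mgf_sum hYmeas R]
    calc ∏ r ∈ R, mgf (Y r) μ s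
        ≤ ∏ r ∈ R, Real.exp (s ^ 2 * M r ^ 2 / 8) := by
          refine Finset.prod_le_prod (fun r _ => mgf_nonneg) (fun r hr => ?_)
          exact mgf_single μ (hmeas r) (hM r hr) (fun ω => hrange r hr ω) s
      _ = Real.exp (∑ r ∈ R, s ^ 2 * M r ^ 2 / 8) := (Real.exp_sum R _).symm
      _ = Real.exp (s ^ 2 * V / 8) := by
          rw [hVdef]
          congr 1
          rw [← Finset.sum_div, ← Finset.mul_sum]
  -- numeric computation
  have hVle : V ≤ ε ^ 2 * d ^ 2 * Δ := by
    rw [hVdef, hΔdef, Finset.mul_sum]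
    refine Finset.sum_le_sum (fun r hr => ?_)
    have hMle : M r ≤ ε * d * (M r / m r) := by
      have hmr := hm r hr
      have h1 : M r = (M r / m r) * m r := by field_simp
      calc M r = (M r / m r) * m r := h1
      _ ≤ (M r / m r) * (ε * d) :=
          mul_le_mul_of_nonneg_left (hmd r hr) (div_pos (hM r hr) (hm r hr)).le
      _ = ε * d * (M r / m r) := by ring
    calc M r ^ 2 ≤ (ε * d * (M r / m r)) ^ 2 :=
        pow_le_pow_left₀ (hM r hr).le hMle 2
    _ = ε ^ 2 * d ^ 2 * (M r / m r) ^ 2 := by ring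
  have ht2 : t ^ 2 = ε ^ 2 * (2 * Δ * Real.log n) * d ^ 2 := by
    rw [htdef, hcdef]
    rw [mul_pow, mul_pow, Real.sq_sqrt (by positivity)]
  have hεdΔpos : 0 < ε ^ 2 * d ^ 2 * Δ := by positivity
  have hexp_bound : -s * t + s ^ 2 * V / 8 ≤ -(4 * Real.log n) := by
    have h1 : -s * t + s ^ 2 * V / 8 = -(2 * t ^ 2 / V) := by
      rw [hsdef]; field_simp; ring
    rw [h1]
    have h2 : 2 * t ^ 2 / (ε ^ 2 * d ^ 2 * Δ) ≤ 2 * t ^ 2 / V :=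
      div_le_div_of_nonneg_left (by positivity) hVpos hVle
    have h3 : 2 * t ^ 2 / (ε ^ 2 * d ^ 2 * Δ) = 4 * Real.log n := by
      rw [ht2]; field_simp; ring
    linarith
  have hfinal_real : (μ {ω | t ≤ X ω}).toReal ≤ ((n : ℝ) ^ 4)⁻¹ := by
    calc (μ {ω | t ≤ X ω}).toReal ≤ Real.exp (-s * t) * mgf X μ s := hcher
    _ ≤ Real.exp (-s * t) * Real.exp (s ^ 2 * V / 8) :=
        mul_le_mul_of_nonneg_left hmgfbd (Real.exp_pos _).le
    _ = Real.exp (-s * t + s ^ 2 * V / 8) := (Real.exp_add _ _).symm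
    _ ≤ Real.exp (-(4 * Real.log n)) := Real.exp_le_exp.mpr hexp_bound
    _ = ((n : ℝ) ^ 4)⁻¹ := by
        rw [Real.exp_neg]
        congr 1
        rw [show (4 : ℝ) * Real.log n = (4 : ℕ) * Real.log n by norm_num,
          Real.exp_nat_mul, Real.exp_log hnpos]
  -- subset
  have hsubset : {ω | (1 + ε * Real.sqrt (2 * (∑ r ∈ R, (M r / m r) ^ 2) * Real.log n)) * d
        ≤ ∑ r ∈ R, A r ω} ⊆ {ω | t ≤ X ω} := by
    intro ω hω
    simp only [Set.mem_setOf_eq] at hω ⊢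
    rw [hXapp ω]
    rw [← hΔdef, ← hcdef] at hω
    have : (1 + c) * d = d + t := by rw [htdef]; ring
    rw [this] at hω
    linarith
  calc μ {ω | (1 + ε * Real.sqrt (2 * (∑ r ∈ R, (M r / m r) ^ 2) * Real.log n)) * d
        ≤ ∑ r ∈ R, A r ω} ≤ μ {ω | t ≤ X ω} := measure_mono hsubset
  _ = ENNReal.ofReal ((μ {ω | t ≤ X ω}).toReal) :=
      (ENNReal.ofReal_toReal (measure_ne_top μ _)).symm
  _ ≤ ENNReal.ofReal (((n : ℝ) ^ 4)⁻¹) := ENNReal.ofReal_le_ofReal hfinal_real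
  _ = ((n : ENNReal) ^ 4)⁻¹ := by
      rw [ENNReal.ofReal_inv_of_pos (by positivity), ENNReal.ofReal_pow (by positivity),
        ENNReal.ofReal_natCast]
end

section
/- Let {A_r}_{r∈R} be independent random variables with A_r ∈ [0, M_r], and let A = Σ_r A_r with E[A] ≤ 2d for some d > 0 (the doubled capacity arising from rescaled decomposition weights). Suppose 0 < ε ≤ 1, m_r ≤ ε·d for all r, Δ = Σ_r (M_r/m_r)², and n ≥ 3. Then P(A ≥ (2 + ε·√(2·Δ·log n))·d) ≤ n^{−4}. -/
open MeasureTheory ProbabilityTheory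

lemma hoeff_key {p h : ℝ} (hp0 : 0 ≤ p) (hp1 : p ≤ 1) (hh : 0 ≤ h) :
    1 - p + p * Real.exp h ≤ Real.exp (p * h + h ^ 2 / 8) := by
  set D : ℝ → ℝ := fun x => 1 - p + p * Real.exp x with hDdef
  have hDpos : ∀ x, 0 < D x := by
    intro x
    show 0 < 1 - p + p * Real.exp x
    rcases eq_or_lt_of_le hp0 with h0 | h0
    · simp [← h0]
    · nlinarith [mul_pos h0 (Real.exp_pos x)]
  have hD : ∀ x, HasDerivAt D (p * Real.exp x) x := by
    intro x
    exact ((Real.hasDerivAt_exp x).const_mul p).const_add (1 - p)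
  set g : ℝ → ℝ := fun x => p + x / 4 - p * Real.exp x / D x with hgdef
  have hg : ∀ x, HasDerivAt g
      (1 / 4 - ((p * Real.exp x) * D x - (p * Real.exp x) * (p * Real.exp x)) / (D x) ^ 2) x := by
    intro x
    have h1 : HasDerivAt (fun y : ℝ => p + y / 4) (1 / 4) x := by
      simpa using ((hasDerivAt_id x).div_const 4).const_add p
    have h2 : HasDerivAt (fun y : ℝ => p * Real.exp y) (p * Real.exp x) x :=
      (Real.hasDerivAt_exp x).const_mul p
    exact h1.sub (h2.div (hD x) (hDpos x).ne')
  have hg'nonneg : ∀ x, 0 ≤ 1 / 4 - ((p * Real.exp x) * D x - (p * Real.exp x) * (p * Real.exp x)) / (D x) ^ 2 := by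
    intro x
    set a := p * Real.exp x with ha
    set Dx := D x with hDx'
    have ha0 : 0 ≤ a := mul_nonneg hp0 (Real.exp_pos x).le
    have haD : a ≤ Dx := by simp [hDx', hDdef, ha]; linarith
    have hDx : 0 < Dx := hDpos x
    clear_value a Dx
    have : (a * Dx - a * a) / Dx ^ 2 ≤ 1 / 4 := by
      rw [div_le_iff₀ (by positivity)]
      nlinarith [sq_nonneg (Dx - 2 * a)]
    linarith
  have hgcont : Continuous g :=
    continuous_iff_continuousAt.mpr fun x => (hg x).differentiableAt.continuousAt
  have hgmono : MonotoneOn g (Set.Ici 0) := by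
    apply monotoneOn_of_deriv_nonneg (convex_Ici 0) hgcont.continuousOn
    · intro x _
      exact (hg x).differentiableAt.differentiableWithinAt
    · intro x _
      rw [(hg x).deriv]
      exact hg'nonneg x
  have hg0 : g 0 = 0 := by simp [hgdef, hDdef]
  have hgnonneg : ∀ x ∈ Set.Ici (0 : ℝ), 0 ≤ g x := by
    intro x hx
    rw [← hg0]
    exact hgmono Set.self_mem_Ici hx hx
  set f : ℝ → ℝ := fun x => p * x + x ^ 2 / 8 - Real.log (D x) with hfdef
  have hf : ∀ x, HasDerivAt f (g x) x := by
    intro x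
    have h1 : HasDerivAt (fun y : ℝ => p * y) p x := by
      simpa using (hasDerivAt_id x).const_mul p
    have h2 : HasDerivAt (fun y : ℝ => y ^ 2 / 8) (x / 4) x := by
      have := (hasDerivAt_pow 2 x).div_const 8
      refine this.congr_deriv ?_
      norm_num
      ring
    have h3 : HasDerivAt (fun y : ℝ => Real.log (D y)) (p * Real.exp x / D x) x :=
      (hD x).log (hDpos x).ne'
    exact (h1.add h2).sub h3
  have hfcont : Continuous f :=
    continuous_iff_continuousAt.mpr fun x => (hf x).differentiableAt.continuousAt
  have hfmono : MonotoneOn f (Set.Ici 0) := by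
    apply monotoneOn_of_deriv_nonneg (convex_Ici 0) hfcont.continuousOn
    · intro x _
      exact (hf x).differentiableAt.differentiableWithinAt
    · intro x hx
      rw [(hf x).deriv]
      exact hgnonneg x (interior_subset hx)
  have hf0 : f 0 = 0 := by simp [hfdef, hDdef]
  have hfh : 0 ≤ f h := by
    rw [← hf0]
    exact hfmono Set.self_mem_Ici hh hh
  have hlog : Real.log (D h) ≤ p * h + h ^ 2 / 8 := by
    simp only [hfdef] at hfh; linarith
  calc 1 - p + p * Real.exp h = D h := rfl
    _ = Real.exp (Real.log (D h)) := (Real.exp_log (hDpos h)).symm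
    _ ≤ Real.exp (p * h + h ^ 2 / 8) := Real.exp_le_exp.mpr hlog

lemma hoeff_mgf {Ω : Type*} [MeasurableSpace Ω] (μ : Measure Ω) [IsProbabilityMeasure μ]
    (X : Ω → ℝ) (M : ℝ) (hM : 0 < M) (hmeas : Measurable X)
    (hrange : ∀ ω, X ω ∈ Set.Icc (0 : ℝ) M) (t : ℝ) (ht : 0 ≤ t) :
    mgf X μ t ≤ Real.exp (t * (∫ ω, X ω ∂μ) + t ^ 2 * M ^ 2 / 8) := by
  have hXint : Integrable X μ := by
    refine Integrable.mono' (integrable_const M) hmeas.aestronglyMeasurable (ae_of_all _ fun ω => ?_)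
    rw [Real.norm_eq_abs, abs_of_nonneg (hrange ω).1]
    exact (hrange ω).2
  have hexpint : Integrable (fun ω => Real.exp (t * X ω)) μ := by
    refine Integrable.mono' (integrable_const (Real.exp (t * M)))
      (Real.measurable_exp.comp (hmeas.const_mul t)).aestronglyMeasurable
      (ae_of_all _ fun ω => ?_)
    rw [Real.norm_eq_abs, abs_of_nonneg (Real.exp_pos _).le]
    exact Real.exp_le_exp.mpr (mul_le_mul_of_nonneg_left (hrange ω).2 ht)
  have hconv : ∀ ω, Real.exp (t * X ω) ≤ (1 - X ω / M) + (X ω / M) * Real.exp (t * M) := by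
    intro ω
    have h1 : 0 ≤ 1 - X ω / M := by
      rw [sub_nonneg, div_le_one hM]; exact (hrange ω).2
    have h2 : 0 ≤ X ω / M := div_nonneg (hrange ω).1 hM.le
    have key := convexOn_exp.2 (Set.mem_univ (0 : ℝ)) (Set.mem_univ (t * M)) h1 h2 (by ring)
    have harg : (1 - X ω / M) • (0 : ℝ) + (X ω / M) • (t * M) = t * X ω := by
      rw [smul_eq_mul, smul_eq_mul]
      field_simp
      ring
    rw [harg, smul_eq_mul, smul_eq_mul, Real.exp_zero, mul_one] at key
    exact key
  have hint_rhs : Integrable (fun ω => (1 - X ω / M) + (X ω / M) * Real.exp (t * M)) μ :=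
    ((integrable_const 1).sub (hXint.div_const M)).add ((hXint.div_const M).mul_const _)
  have hle : mgf X μ t ≤ 1 - (∫ ω, X ω ∂μ) / M + ((∫ ω, X ω ∂μ) / M) * Real.exp (t * M) := by
    have hf1 : Integrable (fun ω => 1 - X ω / M) μ := (integrable_const 1).sub (hXint.div_const M)
    have hf2 : Integrable (fun ω => X ω / M * Real.exp (t * M)) μ :=
      (hXint.div_const M).mul_const _
    have h1 := integral_mono hexpint hint_rhs hconv
    rw [integral_add hf1 hf2, integral_sub (integrable_const 1) (hXint.div_const M),
      integral_mul_const, integral_div, integral_const] at h1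
    simpa [mgf] using h1
  set p := (∫ ω, X ω ∂μ) / M with hp
  have hp0 : 0 ≤ p := div_nonneg (integral_nonneg fun ω => (hrange ω).1) hM.le
  have hp1 : p ≤ 1 := by
    rw [hp, div_le_one hM]
    calc (∫ ω, X ω ∂μ) ≤ ∫ _, M ∂μ := integral_mono hXint (integrable_const M) fun ω => (hrange ω).2
      _ = M := by simp
  have hkey := hoeff_key hp0 hp1 (mul_nonneg ht hM.le) (h := t * M)
  have heq : p * (t * M) + (t * M) ^ 2 / 8 = t * (∫ ω, X ω ∂μ) + t ^ 2 * M ^ 2 / 8 := by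
    rw [hp]
    field_simp
  calc mgf X μ t ≤ 1 - p + p * Real.exp (t * M) := hle
    _ ≤ Real.exp (p * (t * M) + (t * M) ^ 2 / 8) := hkey
    _ = _ := by rw [heq]


/-- Hoeffding-type capacity violation bound (cost variant, with doubled expected load).  For
independent allocations `A r ∈ [0, M r]` with `E[Σ A r] ≤ 2·d`, demands `m r ≤ ε·d`
(`0 < ε ≤ 1`), `Δ = Σ (M r / m r)²` and `n ≥ 3`,
`P(Σ A r ≥ (2 + ε·√(2·Δ·log n))·d) ≤ n⁻⁴`. -/
theorem stmt12 {Ω : Type*} [MeasurableSpace Ω] (μ : Measure Ω) [IsProbabilityMeasure μ]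
    {ι : Type*} (R : Finset ι) (A : ι → Ω → ℝ) (M m : ι → ℝ) (d ε : ℝ) (n : ℕ)
    (hmeas : ∀ r, Measurable (A r))
    (hindep : iIndepFun A μ)
    (hrange : ∀ r ∈ R, ∀ ω, A r ω ∈ Set.Icc (0 : ℝ) (M r))
    (hM : ∀ r ∈ R, 0 < M r) (hm : ∀ r ∈ R, 0 < m r)
    (hd : 0 < d)
    (hE : ∫ ω, (∑ r ∈ R, A r ω) ∂μ ≤ 2 * d)
    (hε : 0 < ε) (hε1 : ε ≤ 1)
    (hmd : ∀ r ∈ R, m r ≤ ε * d)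
    (hn : 3 ≤ n) :
    μ {ω | (2 + ε * Real.sqrt (2 * (∑ r ∈ R, (M r / m r) ^ 2) * Real.log n)) * d
        ≤ ∑ r ∈ R, A r ω}
      ≤ ((n : ENNReal) ^ 4)⁻¹ := by
  classical
  rcases R.eq_empty_or_nonempty with hR | hR
  · subst hR
    have hempty : {ω : Ω | (2 + ε * Real.sqrt (2 * (∑ r ∈ (∅ : Finset ι), (M r / m r) ^ 2)
        * Real.log n)) * d ≤ ∑ r ∈ (∅ : Finset ι), A r ω} = ∅ := by
      rw [Set.eq_empty_iff_forall_notMem]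
      intro ω hω
      simp only [Finset.sum_empty, mul_zero, zero_mul, Real.sqrt_zero, add_zero,
        Set.mem_setOf_eq] at hω
      linarith
    rw [hempty]
    simp
  -- notation
  set Δ : ℝ := ∑ r ∈ R, (M r / m r) ^ 2 with hΔdef
  set S : ℝ := ∑ r ∈ R, (M r) ^ 2 with hSdef
  set EA : ℝ := ∫ ω, (∑ r ∈ R, A r ω) ∂μ with hEAdef
  have hn1 : (1 : ℝ) < n := by exact_mod_cast lt_of_lt_of_le (by norm_num) hn
  have hn0 : (0 : ℝ) < n := lt_trans one_pos hn1
  have hlogn : 0 < Real.log n := Real.log_pos hn1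
  have hΔpos : 0 < Δ :=
    Finset.sum_pos (fun r hr => pow_pos (div_pos (hM r hr) (hm r hr)) 2) hR
  have hSpos : 0 < S := Finset.sum_pos (fun r hr => pow_pos (hM r hr) 2) hR
  have hSle : S ≤ Δ * (ε ^ 2 * d ^ 2) := by
    rw [hΔdef, hSdef, Finset.sum_mul]
    refine Finset.sum_le_sum fun r hr => ?_
    have hmr := hm r hr
    have hMr := hM r hr
    have h1 : M r ≤ (M r / m r) * (ε * d) := by
      rw [div_mul_eq_mul_div, le_div_iff₀ hmr]
      exact mul_le_mul_of_nonneg_left (hmd r hr) hMr.le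
    calc (M r) ^ 2 ≤ ((M r / m r) * (ε * d)) ^ 2 := by
          apply pow_le_pow_left₀ hMr.le h1
      _ = (M r / m r) ^ 2 * (ε ^ 2 * d ^ 2) := by ring
  set c : ℝ := ε * Real.sqrt (2 * Δ * Real.log n) with hcdef
  have hc0 : 0 ≤ c := mul_nonneg hε.le (Real.sqrt_nonneg _)
  have hc2 : c ^ 2 = ε ^ 2 * (2 * Δ * Real.log n) := by
    rw [hcdef, mul_pow, Real.sq_sqrt (by positivity)]
  set t : ℝ := 4 * c * d / S with htdef
  have ht0 : 0 ≤ t := by positivity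
  -- integrability
  have hAint : ∀ r ∈ R, Integrable (A r) μ := by
    intro r hr
    refine Integrable.mono' (integrable_const (M r)) (hmeas r).aestronglyMeasurable
      (ae_of_all _ fun ω => ?_)
    rw [Real.norm_eq_abs, abs_of_nonneg (hrange r hr ω).1]
    exact (hrange r hr ω).2
  have hint : ∀ r ∈ R, Integrable (fun ω => Real.exp (t * A r ω)) μ := by
    intro r hr
    refine Integrable.mono' (integrable_const (Real.exp (t * M r)))
      (Real.measurable_exp.comp ((hmeas r).const_mul t)).aestronglyMeasurable
      (ae_of_all _ fun ω => ?_)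
    rw [Real.norm_eq_abs, abs_of_nonneg (Real.exp_pos _).le]
    exact Real.exp_le_exp.mpr (mul_le_mul_of_nonneg_left (hrange r hr ω).2 ht0)
  have hsum_int := hindep.integrable_exp_mul_sum hmeas hint
  -- Chernoff
  have hcher := measure_ge_le_exp_mul_mgf (μ := μ) (X := ∑ r ∈ R, A r) ((2 + c) * d) ht0 hsum_int
  -- mgf bound
  have hmgf : mgf (∑ r ∈ R, A r) μ t ≤ Real.exp (t * EA + t ^ 2 * S / 8) := by
    rw [hindep.mgf_sum hmeas]
    have h1 : ∀ r ∈ R, mgf (A r) μ t ≤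
        Real.exp (t * (∫ ω, A r ω ∂μ) + t ^ 2 * (M r) ^ 2 / 8) := fun r hr =>
      hoeff_mgf μ (A r) (M r) (hM r hr) (hmeas r) (hrange r hr) t ht0
    calc ∏ r ∈ R, mgf (A r) μ t
        ≤ ∏ r ∈ R, Real.exp (t * (∫ ω, A r ω ∂μ) + t ^ 2 * (M r) ^ 2 / 8) :=
          Finset.prod_le_prod (fun r _ => mgf_nonneg) h1
      _ = Real.exp (∑ r ∈ R, (t * (∫ ω, A r ω ∂μ) + t ^ 2 * (M r) ^ 2 / 8)) :=
          (Real.exp_sum R _).symm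
      _ = Real.exp (t * EA + t ^ 2 * S / 8) := by
          have e1 : ∑ r ∈ R, (t * (∫ ω, A r ω ∂μ) + t ^ 2 * (M r) ^ 2 / 8)
              = t * (∑ r ∈ R, ∫ ω, A r ω ∂μ) + t ^ 2 * (∑ r ∈ R, (M r) ^ 2) / 8 := by
            simp only [Finset.sum_add_distrib, Finset.mul_sum, Finset.sum_div, mul_div_assoc]
          rw [e1, hEAdef, hSdef, integral_finset_sum R hAint]
  -- exponent arithmetic
  have hEAle : EA ≤ 2 * d := hE
  have hexp : -t * ((2 + c) * d) + (t * EA + t ^ 2 * S / 8) ≤ -(4 * Real.log n) := by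
    have h1 : t * EA ≤ t * (2 * d) := mul_le_mul_of_nonneg_left hEAle ht0
    have h2 : -t * ((2 + c) * d) + (t * (2 * d) + t ^ 2 * S / 8) = -(2 * c ^ 2 * d ^ 2 / S) := by
      rw [htdef]
      field_simp
      ring
    have h3 : 4 * Real.log n ≤ 2 * c ^ 2 * d ^ 2 / S := by
      rw [le_div_iff₀ hSpos]
      have h4 : 4 * Real.log n * S ≤ 4 * Real.log n * (Δ * (ε ^ 2 * d ^ 2)) :=
        mul_le_mul_of_nonneg_left hSle (by positivity)
      calc 4 * Real.log n * S ≤ 4 * Real.log n * (Δ * (ε ^ 2 * d ^ 2)) := h4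
        _ = 2 * c ^ 2 * d ^ 2 := by rw [hc2]; ring
    linarith
  -- put together on toReal level
  have hfinal : (μ {ω | (2 + c) * d ≤ (∑ r ∈ R, A r) ω}).toReal ≤ ((n : ℝ) ^ 4)⁻¹ := by
    have h5 : Real.exp (-t * ((2 + c) * d)) * mgf (∑ r ∈ R, A r) μ t ≤
        Real.exp (-t * ((2 + c) * d) + (t * EA + t ^ 2 * S / 8)) := by
      rw [Real.exp_add]
      exact mul_le_mul_of_nonneg_left hmgf (Real.exp_pos _).le
    have h6 : Real.exp (-(4 * Real.log n)) = ((n : ℝ) ^ 4)⁻¹ := by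
      rw [Real.exp_neg]
      congr 1
      rw [show (4 : ℝ) * Real.log n = (4 : ℕ) * Real.log n by norm_num,
        Real.exp_nat_mul, Real.exp_log hn0]
    calc (μ {ω | (2 + c) * d ≤ (∑ r ∈ R, A r) ω}).toReal
        ≤ Real.exp (-t * ((2 + c) * d)) * mgf (∑ r ∈ R, A r) μ t := hcher
      _ ≤ Real.exp (-t * ((2 + c) * d) + (t * EA + t ^ 2 * S / 8)) := h5
      _ ≤ Real.exp (-(4 * Real.log n)) := Real.exp_le_exp.mpr hexp
      _ = ((n : ℝ) ^ 4)⁻¹ := h6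
  have hset : {ω : Ω | (2 + ε * Real.sqrt (2 * Δ * Real.log n)) * d ≤ ∑ r ∈ R, A r ω}
      = {ω | (2 + c) * d ≤ (∑ r ∈ R, A r) ω} := by
    ext ω
    simp [hcdef, Finset.sum_apply]
  rw [hset]
  have hcast : ((n : ENNReal) ^ 4)⁻¹ = ENNReal.ofReal (((n : ℝ) ^ 4)⁻¹) := by
    rw [ENNReal.ofReal_inv_of_pos (by positivity), ENNReal.ofReal_pow hn0.le,
      ENNReal.ofReal_natCast]
  rw [hcast]
  exact (ENNReal.le_ofReal_iff_toReal_le (measure_ne_top μ _) (by positivity)).mpr hfinal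
end

section
/- Let G^X = (V, E^X, s) be an extraction order. If two vertices i, i' are each the source of a confluence with target j, then either i' lies on a directed path from i to j, or i lies on a directed path from i' to j, or there exists a vertex s' that reaches both i and i' and is itself the source of a confluence with target j whose path-edge set contains all edges on paths from i to j and from i' to j. -/
section AuxLemmas
variable {V : Type*} {E : Finset (V × V)}

lemma pathEdges_cons₂ (a b : V) (l : List V) :
    pathEdges (a :: b :: l) = (a, b) :: pathEdges (b :: l) := rfl

lemma pathEdges_nil : pathEdges ([] : List V) = [] := rfl
lemma pathEdges_singleton (a : V) : pathEdges [a] = [] := rfl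

lemma pathEdges_append_right (l m : List V) {e : V × V} (h : e ∈ pathEdges m) :
    e ∈ pathEdges (l ++ m) := by
  induction l with
  | nil => simpa using h
  | cons a t ih =>
    rcases t with _ | ⟨b, t'⟩
    · rcases m with _ | ⟨c, m'⟩
      · simp [pathEdges_nil] at h
      · simpa [pathEdges_cons₂] using Or.inr ih
    · simpa [pathEdges_cons₂] using Or.inr ih

lemma pathEdges_append_congr (l : List V) (b : V) (q : List V) {e : V × V}
    (h : e ∈ pathEdges (l ++ [b])) : e ∈ pathEdges (l ++ b :: q) := by
  induction l with
  | nil => simp [pathEdges_singleton] at h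
  | cons a t ih =>
    rcases t with _ | ⟨c, t'⟩
    · simp only [List.nil_append] at *
      simp [pathEdges_cons₂, pathEdges_singleton] at h
      simp [pathEdges_cons₂, h]
    · simp only [List.cons_append] at *
      rw [pathEdges_cons₂] at h ⊢
      rcases List.mem_cons.1 h with h | h
      · exact List.mem_cons.2 (Or.inl h)
      · exact List.mem_cons.2 (Or.inr (ih h))

lemma pathEdges_concat_mem (q : List V) (u w : V) (hq : q.getLast? = some u) {e : V × V}
    (he : e ∈ pathEdges (q ++ [w])) : e ∈ pathEdges q ∨ e = (u, w) := by
  induction q with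
  | nil => simp at hq
  | cons a t ih =>
    rcases t with _ | ⟨c, t'⟩
    · simp at hq
      subst hq
      simp [pathEdges_cons₂, pathEdges_singleton] at he
      exact Or.inr he
    · simp only [List.cons_append] at he
      rw [pathEdges_cons₂] at he
      rcases List.mem_cons.1 he with h | h
      · exact Or.inl (by rw [pathEdges_cons₂]; exact List.mem_cons.2 (Or.inl h))
      · have hq' : (c :: t').getLast? = some u := by
          rwa [List.getLast?_cons_cons] at hq
        rcases ih hq' h with h' | h'
        · exact Or.inl (by rw [pathEdges_cons₂]; exact List.mem_cons.2 (Or.inr h'))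
        · exact Or.inr h'

lemma pathEdges_append_cases (l : List V) (b : V) (q' : List V) {e : V × V}
    (h : e ∈ pathEdges (l ++ b :: q')) :
    e ∈ pathEdges (l ++ [b]) ∨ e ∈ pathEdges (b :: q') := by
  induction l with
  | nil => exact Or.inr (by simpa using h)
  | cons a t ih =>
    rcases t with _ | ⟨c, t'⟩
    · simp only [List.nil_append, List.cons_append] at h ⊢
      rw [pathEdges_cons₂] at h
      rcases List.mem_cons.1 h with h | h
      · exact Or.inl (by subst h; simp [pathEdges_cons₂, pathEdges_singleton])
      · exact Or.inr h
    · simp only [List.cons_append] at h ⊢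
      rw [pathEdges_cons₂] at h
      rcases List.mem_cons.1 h with h | h
      · exact Or.inl (by
          subst h
          rw [pathEdges_cons₂]
          exact List.mem_cons_self)
      · rcases ih h with h' | h'
        · exact Or.inl (by
            rw [pathEdges_cons₂]
            exact List.mem_cons.2 (Or.inr h'))
        · exact Or.inr h'

lemma isPath_suffix {a b v : V} {l₁ l₂ : List V}
    (h : IsPath E a b (l₁ ++ v :: l₂)) : IsPath E v b (v :: l₂) := by
  obtain ⟨-, -, hlast, hnd, hE⟩ := h
  refine ⟨List.cons_ne_nil _ _, rfl, ?_, ?_, ?_⟩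
  · rw [List.getLast?_append] at hlast
    simpa using hlast
  · exact hnd.sublist (List.sublist_append_right l₁ (v :: l₂))
  · intro e he; exact hE e (pathEdges_append_right l₁ _ he)

lemma isPath_prefix {a b v : V} {l₁ l₂ : List V}
    (h : IsPath E a b (l₁ ++ v :: l₂)) : IsPath E a v (l₁ ++ [v]) := by
  obtain ⟨-, hhead, -, hnd, hE⟩ := h
  refine ⟨by simp, ?_, List.getLast?_concat, ?_, ?_⟩
  · rcases l₁ with _ | ⟨c, t⟩ <;> simpa using hhead
  · exact hnd.sublist (List.Sublist.append_left
      (List.cons_sublist_cons.2 (List.nil_sublist l₂)) l₁)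
  · intro e he; exact hE e (pathEdges_append_congr l₁ v l₂ he)

lemma path_suffix_of_mem {a b v : V} {p : List V} (h : IsPath E a b p) (hv : v ∈ p) :
    ∃ l, IsPath E v b l ∧ ∀ u ∈ l, u ∈ p := by
  obtain ⟨s, t, rfl⟩ := List.append_of_mem hv
  exact ⟨v :: t, isPath_suffix h, fun u hu => List.mem_append_right s hu⟩

lemma path_prefix_of_mem {a b v : V} {p : List V} (h : IsPath E a b p) (hv : v ∈ p) :
    ∃ l, IsPath E a v l ∧ ∀ u ∈ l, u ∈ p := by
  obtain ⟨s, t, rfl⟩ := List.append_of_mem hv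
  refine ⟨s ++ [v], isPath_prefix h, fun u hu => ?_⟩
  rcases List.mem_append.1 hu with h' | h'
  · exact List.mem_append_left _ h'
  · simp at h'; subst h'; exact List.mem_append_right _ (List.mem_cons_self)

lemma path_antisymm (hacy : ∀ u v : V, (u, v) ∈ E → ¬∃ p : List V, IsPath E v u p) :
    ∀ n (p : List V), p.length ≤ n → ∀ u v (q : List V),
      IsPath E u v p → IsPath E v u q → u = v := by
  intro n
  induction n with
  | zero =>
    intro p hp u v q hpuv _
    rcases p with _ | _
    · exact absurd rfl hpuv.1
    · simp at hp
  | succ n ih =>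
    intro p hp u v q hpuv hqvu
    rcases p with _ | ⟨a, t⟩
    · exact absurd rfl hpuv.1
    have ha : a = u := by simpa using hpuv.2.1
    subst ha
    rcases t with _ | ⟨w, t'⟩
    · have : (([a] : List V)).getLast? = some a := rfl
      rw [hpuv.2.2.1] at this; simpa using (Option.some_injective _ this).symm
    · have hedge : (a, w) ∈ E := hpuv.2.2.2.2 (a, w) (by
        rw [pathEdges_cons₂]; exact List.mem_cons_self)
      have htail : IsPath E w v (w :: t') := isPath_suffix (l₁ := [a]) hpuv
      by_cases hw : w ∈ q
      · obtain ⟨l, hl, -⟩ := path_suffix_of_mem hqvu hw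
        exact absurd ⟨l, hl⟩ (hacy a w hedge)
      · -- build q ++ [w] : path v → w
        have hlastq : q.getLast? = some a := hqvu.2.2.1
        have hq' : IsPath E v w (q ++ [w]) := by
          refine ⟨by simp [hqvu.1], ?_, List.getLast?_concat, ?_, ?_⟩
          · rcases q with _ | ⟨c, t''⟩
            · exact absurd rfl hqvu.1
            · simpa using hqvu.2.1
          · exact hqvu.2.2.2.1.append (List.nodup_singleton w)
              (by intro x hx hx'; simp at hx'; subst hx'; exact hw hx)
          · intro e he
            rcases pathEdges_concat_mem q a w hlastq he with h' | h'
            · exact hqvu.2.2.2.2 e h'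
            · subst h'; exact hedge
        have hwv : w = v := ih (w :: t') (by simp only [List.length_cons] at hp ⊢; omega)
          w v (q ++ [w]) htail hq'
        subst hwv
        exact absurd (List.mem_of_mem_head? (by rw [hqvu.2.1]; rfl)) hw

lemma path_antisymm' (hacy : ∀ u v : V, (u, v) ∈ E → ¬∃ p : List V, IsPath E v u p)
    {u v : V} {p q : List V} (hp : IsPath E u v p) (hq : IsPath E v u q) : u = v :=
  path_antisymm hacy p.length p le_rfl u v q hp hq

lemma isPath_trans (hacy : ∀ u v : V, (u, v) ∈ E → ¬∃ p : List V, IsPath E v u p)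
    {a b c : V} {p q : List V} (hp : IsPath E a b p) (hq : IsPath E b c q) :
    ∃ r, IsPath E a c r ∧ (∀ v ∈ r, v ∈ p ∨ v ∈ q) ∧ (∀ v ∈ p, v ∈ r) ∧ (∀ v ∈ q, v ∈ r) ∧
      (∀ e ∈ pathEdges p, e ∈ pathEdges r) ∧ (∀ e ∈ pathEdges q, e ∈ pathEdges r) := by
  have hbq : b ∈ q := List.mem_of_mem_head? (by rw [hq.2.1]; rfl)
  obtain ⟨p', hp'⟩ : ∃ p', p = p' ++ [b] := by
    rcases List.eq_nil_or_concat p with rfl | ⟨p', z, hz⟩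
    · exact absurd rfl hp.1
    · rw [List.concat_eq_append] at hz
      subst hz
      have : z = b := by
        have := hp.2.2.1
        rw [List.getLast?_concat] at this
        exact (Option.some_injective _ this)
      exact ⟨p', by rw [this]⟩
  obtain ⟨p', rfl⟩ := hp'
  obtain ⟨q', hq'⟩ : ∃ q', q = b :: q' := by
    rcases q with _ | ⟨c', t⟩
    · exact absurd rfl hq.1
    · have : c' = b := by simpa using hq.2.1
      exact ⟨t, by rw [this]⟩
  have hnodisj : ∀ v ∈ p', v ∉ q := by
    intro v hv hvq
    have hvp : v ∈ p' ++ [b] := List.mem_append_left _ hv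
    obtain ⟨l₁, hl₁, -⟩ := path_suffix_of_mem hp hvp
    obtain ⟨l₂, hl₂, -⟩ := path_prefix_of_mem hq hvq
    have : v = b := path_antisymm' hacy hl₁ hl₂
    subst this
    have := (List.nodup_append.1 hp.2.2.2.1).2.2
    exact this v hv v (by simp) rfl
  refine ⟨p' ++ q, ⟨?_, ?_, ?_, ?_, ?_⟩, ?_, ?_, ?_, ?_, ?_⟩
  · simp [hq.1]
  · rcases p' with _ | ⟨d, t⟩
    · have : b = a := by simpa using hp.2.1
      subst this; simpa using hq.2.1
    · simpa using hp.2.1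
  · rw [List.getLast?_append, hq.2.2.1]; rfl
  · exact ((List.nodup_append.1 hp.2.2.2.1).1).append hq.2.2.2.1
      (by intro x hx hx'; exact hnodisj x hx hx')
  · intro e he
    rw [hq'] at he
    rcases pathEdges_append_cases p' b q' he with h | h
    · exact hp.2.2.2.2 e h
    · rw [← hq'] at h; exact hq.2.2.2.2 e h
  · intro v hv
    rcases List.mem_append.1 hv with h | h
    · exact Or.inl (List.mem_append_left _ h)
    · exact Or.inr h
  · intro v hv
    rcases List.mem_append.1 hv with h | h
    · exact List.mem_append_left _ h
    · simp at h; subst h; exact List.mem_append_right _ hbq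
  · intro v hv; exact List.mem_append_right _ hv
  · intro e he
    rw [hq']
    exact pathEdges_append_congr p' b q' he
  · intro e he; exact pathEdges_append_right p' q he

end AuxLemmas

section Aux2
variable {V : Type*} {E : Finset (V × V)}

lemma exists_confluence_aux
    (hacy : ∀ u v : V, (u, v) ∈ E → ¬∃ p : List V, IsPath E v u p)
    {i j x y : V} {q₁ q₂ Sxi A₁ : List V}
    (hconf : IsConfluence E i j q₁ q₂)
    (hsxi : IsPath E x i Sxi)
    (hDxy : IsPath E x y (A₁ ++ [y]))
    (hyq : y ∈ q₁)
    (hAq₁ : ∀ v ∈ A₁, v ∉ q₁) (hAq₂ : ∀ v ∈ A₁, v ∉ q₂)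
    (hDS : ∀ v ∈ A₁ ++ [y], v ∈ Sxi → v = x)
    (hiA : i ∉ A₁ ++ [y]) (hxi : x ≠ i) :
    ∃ P₁ P₂, IsConfluence E x j P₁ P₂ := by
  obtain ⟨hij, -, hq1, hq2, hdisj⟩ := hconf
  -- intersections of Sxi with q₁, q₂ are contained in {i}
  have hSq : ∀ (q : List V), IsPath E i j q → ∀ v ∈ Sxi, v ∈ q → v = i := by
    intro q hq v hvS hvq
    obtain ⟨l, hl, -⟩ := path_suffix_of_mem hsxi hvS
    obtain ⟨m, hm, -⟩ := path_prefix_of_mem hq hvq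
    exact path_antisymm' hacy hl hm
  -- x ≠ j
  have hxj : x ≠ j := by
    intro h
    rw [h] at hsxi
    exact hij (path_antisymm' hacy hq1 hsxi)
  -- suffix of q₁ from y
  obtain ⟨B₁, B₂, hq1eq⟩ := List.append_of_mem hyq
  have hQsuf : IsPath E y j (y :: B₂) := by
    rw [hq1eq] at hq1; exact isPath_suffix hq1
  have hQsufq1 : ∀ v ∈ y :: B₂, v ∈ q₁ := by
    rw [hq1eq]; intro v hv; exact List.mem_append_right _ hv
  -- i ∉ y :: B₂
  have hiQ : i ∉ y :: B₂ := by
    intro hmem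
    rcases B₁ with _ | ⟨c, B₁'⟩
    · have : y = i := by
        have h0 := hq1.2.1
        rw [hq1eq] at h0
        simp only [List.nil_append, List.head?_cons] at h0
        exact (Option.some_injective _ h0)
      exact hiA (by rw [this] at hmem ⊢; exact List.mem_append_right _ (by
        simpa using (by rfl : i ∈ ([i] : List V))))
    · have hc : c = i := by
        have h0 := hq1.2.1
        rw [hq1eq] at h0
        simp only [List.cons_append, List.head?_cons] at h0
        exact (Option.some_injective _ h0)
      have hnd := hq1.2.2.2.1
      rw [hq1eq] at hnd
      subst hc
      simp only [List.cons_append, List.nodup_cons] at hnd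
      exact hnd.1 (List.mem_append_right _ hmem)
  -- the two paths
  obtain ⟨P₁, hP₁, hP₁sub, hDxyP₁, -, -, -⟩ := isPath_trans hacy hDxy hQsuf
  obtain ⟨P₂, hP₂, hP₂sub, hSxiP₂, -, -, -⟩ := isPath_trans hacy hsxi hq2
  have hyA : y ∈ A₁ ++ [y] := List.mem_append_right _ (List.mem_cons_self)
  have hdisjP : ∀ v, v ∈ P₁ → v ∈ P₂ → v = x ∨ v = j := by
    intro v hv1 hv2
    rcases hP₁sub v hv1 with hD | hQ
    · rcases hP₂sub v hv2 with hS | h2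
      · exact Or.inl (hDS v hD hS)
      · rcases List.mem_append.1 hD with hA | hy'
        · exact absurd h2 (hAq₂ v hA)
        · have hvy : v = y := by simpa using hy'
          subst hvy
          rcases hdisj v hyq h2 with h | h
          · exact absurd (h ▸ hyA) hiA
          · exact Or.inr h
    · rcases hP₂sub v hv2 with hS | h2
      · have : v = i := hSq q₁ hq1 v hS (hQsufq1 v hQ)
        exact absurd (this ▸ hQ) hiQ
      · rcases hdisj v (hQsufq1 v hQ) h2 with h | h
        · exact absurd (h ▸ hQ) hiQ
        · exact Or.inr h
  have hiP₂ : i ∈ P₂ := hSxiP₂ i (List.mem_of_mem_getLast? (by rw [hsxi.2.2.1]; rfl))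
  refine ⟨P₁, P₂, hxj, ?_, hP₁, hP₂, hdisjP⟩
  intro h
  subst h
  rcases hdisjP i hiP₂ hiP₂ with h | h
  · exact hxi h.symm
  · exact hij h
end Aux2
section Main
variable {V : Type*}

lemma firstSplit (P : V → Prop) (l : List V) (h : ∃ v ∈ l, P v) :
    ∃ l₁ x l₂, l = l₁ ++ x :: l₂ ∧ P x ∧ ∀ v ∈ l₁, ¬ P v := by
  induction l with
  | nil => simp at h
  | cons a t ih =>
    by_cases ha : P a
    · exact ⟨[], a, t, rfl, ha, by simp⟩
    · obtain ⟨v, hv, hPv⟩ := h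
      have hvt : v ∈ t := by
        rcases List.mem_cons.1 hv with rfl | h'
        · exact absurd hPv ha
        · exact h'
      obtain ⟨l₁, x, l₂, heq, hx, hl₁⟩ := ih ⟨v, hvt, hPv⟩
      refine ⟨a :: l₁, x, l₂, by rw [heq]; rfl, hx, ?_⟩
      intro u hu
      rcases List.mem_cons.1 hu with rfl | h'
      · exact ha
      · exact hl₁ u h'

lemma lastSplit (P : V → Prop) (l : List V) (h : ∃ v ∈ l, P v) :
    ∃ l₁ x l₂, l = l₁ ++ x :: l₂ ∧ P x ∧ ∀ v ∈ l₂, ¬ P v := by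
  induction l with
  | nil => simp at h
  | cons a t ih =>
    by_cases ht : ∃ v ∈ t, P v
    · obtain ⟨l₁, x, l₂, heq, hx, hl₂⟩ := ih ht
      exact ⟨a :: l₁, x, l₂, by rw [heq]; rfl, hx, hl₂⟩
    · obtain ⟨v, hv, hPv⟩ := h
      have hva : v = a := by
        rcases List.mem_cons.1 hv with rfl | hm
        · rfl
        · exact absurd ⟨v, hm, hPv⟩ ht
      exact ⟨[], a, t, rfl, hva ▸ hPv, fun u hu hPu => ht ⟨u, hu, hPu⟩⟩

theorem stmt13' (X : ExtractionOrder V) (i i' j : V)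
    (hi : ∃ p₁ p₂, IsConfluence X.E i j p₁ p₂)
    (hi' : ∃ p₁ p₂, IsConfluence X.E i' j p₁ p₂) :
    (∃ p, IsPath X.E i j p ∧ i' ∈ p) ∨
    (∃ p, IsPath X.E i' j p ∧ i ∈ p) ∨
    (∃ s' : V,
      (∃ p, IsPath X.E s' i p) ∧ (∃ p, IsPath X.E s' i' p) ∧
      (∃ q₁ q₂, IsConfluence X.E s' j q₁ q₂) ∧
      (∀ e : V × V, (OnPath X.E i j e ∨ OnPath X.E i' j e) → OnPath X.E s' j e)) := by
  classical
  obtain ⟨q₁, q₂, hc⟩ := hi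
  obtain ⟨r₁, r₂, hc'⟩ := hi'
  have hacy := X.acyclic
  have hq1 : IsPath X.E i j q₁ := hc.2.2.1
  have hq2 : IsPath X.E i j q₂ := hc.2.2.2.1
  have hr1 : IsPath X.E i' j r₁ := hc'.2.2.1
  by_cases h1 : ∃ σ, IsPath X.E i i' σ
  · left
    obtain ⟨σ, hσ⟩ := h1
    obtain ⟨r, hr, -, -, hqr, -, -⟩ := isPath_trans hacy hσ hr1
    exact ⟨r, hr, hqr i' (List.mem_of_mem_head? (by rw [hr1.2.1]; rfl))⟩
  by_cases h2 : ∃ σ, IsPath X.E i' i σ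
  · right; left
    obtain ⟨σ, hσ⟩ := h2
    obtain ⟨r, hr, -, -, hqr, -, -⟩ := isPath_trans hacy hσ hq1
    exact ⟨r, hr, hqr i (List.mem_of_mem_head? (by rw [hq1.2.1]; rfl))⟩
  right; right
  obtain ⟨R, hR⟩ := X.reach i
  obtain ⟨R', hR'⟩ := X.reach i'
  obtain ⟨D, hD, hDsub, -, hr1D, -, -⟩ := isPath_trans hacy hR' hr1
  have hiD : i ∉ D := by
    intro hmem
    rcases hDsub i hmem with h | h
    · obtain ⟨l, hl, -⟩ := path_suffix_of_mem hR' h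
      exact h1 ⟨l, hl⟩
    · obtain ⟨l, hl, -⟩ := path_prefix_of_mem hr1 h
      exact h2 ⟨l, hl⟩
  have hrootD : X.root ∈ D := List.mem_of_mem_head? (by rw [hD.2.1]; rfl)
  have hrootR : X.root ∈ R := List.mem_of_mem_head? (by rw [hR.2.1]; rfl)
  obtain ⟨D₁, x, D₂, hDeq, hxR, hD₂⟩ := lastSplit (fun v => v ∈ R) D ⟨X.root, hrootD, hrootR⟩
  have hxD : x ∈ D := by rw [hDeq]; exact List.mem_append_right _ (List.mem_cons_self)
  have hxi : x ≠ i := fun h => hiD (h ▸ hxD)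
  obtain ⟨Sxi, hsxi, hSxiR⟩ := path_suffix_of_mem hR hxR
  have hxR' : x ∈ R' := by
    rcases hDsub x hxD with h | h
    · exact h
    · exfalso
      obtain ⟨l, hl, -⟩ := path_prefix_of_mem hr1 h
      obtain ⟨r, hr, -, -, -, -, -⟩ := isPath_trans hacy hl hsxi
      exact h2 ⟨r, hr⟩
  obtain ⟨Sxi', hsxi', -⟩ := path_suffix_of_mem hR' hxR'
  have hDx : IsPath X.E x j (x :: D₂) := by
    rw [hDeq] at hD
    exact isPath_suffix hD
  have hjDx : j ∈ x :: D₂ := List.mem_of_mem_getLast? (by rw [hDx.2.2.1]; rfl)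
  have hjq1 : j ∈ q₁ := List.mem_of_mem_getLast? (by rw [hq1.2.2.1]; rfl)
  obtain ⟨A₁, y, A₂, hAeq, hy, hA₁⟩ :=
    firstSplit (fun v => v ∈ q₁ ∨ v ∈ q₂) (x :: D₂) ⟨j, hjDx, Or.inl hjq1⟩
  have hDxy : IsPath X.E x y (A₁ ++ [y]) := by
    rw [hAeq] at hDx
    exact isPath_prefix hDx
  have hDxyDx : ∀ v ∈ A₁ ++ [y], v ∈ x :: D₂ := by
    rw [hAeq]
    intro v hv
    rcases List.mem_append.1 hv with h | h
    · exact List.mem_append_left _ h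
    · have : v = y := by simpa using h
      exact this ▸ List.mem_append_right _ (List.mem_cons_self)
  have hDxD : ∀ v ∈ x :: D₂, v ∈ D := by
    rw [hDeq]; intro v hv; exact List.mem_append_right _ hv
  have hDS : ∀ v ∈ A₁ ++ [y], v ∈ Sxi → v = x := by
    intro v hv hvS
    rcases List.mem_cons.1 (hDxyDx v hv) with h | h
    · exact h
    · exact absurd (hSxiR v hvS) (hD₂ v h)
  have hiA : i ∉ A₁ ++ [y] := fun h => hiD (hDxD _ (hDxyDx _ h))
  have hconfx : ∃ P₁ P₂, IsConfluence X.E x j P₁ P₂ := by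
    rcases hy with hy | hy
    · exact exists_confluence_aux hacy hc hsxi hDxy hy
        (fun v hv h => hA₁ v hv (Or.inl h)) (fun v hv h => hA₁ v hv (Or.inr h)) hDS hiA hxi
    · have hc₂ : IsConfluence X.E i j q₂ q₁ :=
        ⟨hc.1, hc.2.1.symm, hq2, hq1, fun v hv hv' => hc.2.2.2.2 v hv' hv⟩
      exact exists_confluence_aux hacy hc₂ hsxi hDxy hy
        (fun v hv h => hA₁ v hv (Or.inr h)) (fun v hv h => hA₁ v hv (Or.inl h)) hDS hiA hxi
  refine ⟨x, ⟨Sxi, hsxi⟩, ⟨Sxi', hsxi'⟩, hconfx, ?_⟩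
  rintro e (⟨p, hp, hep⟩ | ⟨p, hp, hep⟩)
  · obtain ⟨r, hr, -, -, -, -, her⟩ := isPath_trans hacy hsxi hp
    exact ⟨r, hr, her e hep⟩
  · obtain ⟨r, hr, -, -, -, -, her⟩ := isPath_trans hacy hsxi' hp
    exact ⟨r, hr, her e hep⟩

end Main

/-- If `i` and `i'` are both sources of confluences with target `j`, then
`i'` lies on a path from `i` to `j`, or `i` lies on a path from `i'` to `j`, or there is
a vertex `s'` reaching both which is the source of a confluence with target `j` whose
path-edge set contains all edges on paths from `i` to `j` and from `i'` to `j`. -/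
theorem stmt13 {V : Type*} (X : ExtractionOrder V) (i i' j : V)
    (hi : ∃ p₁ p₂, IsConfluence X.E i j p₁ p₂)
    (hi' : ∃ p₁ p₂, IsConfluence X.E i' j p₁ p₂) :
    (∃ p, IsPath X.E i j p ∧ i' ∈ p) ∨
    (∃ p, IsPath X.E i' j p ∧ i ∈ p) ∨
    (∃ s' : V,
      (∃ p, IsPath X.E s' i p) ∧ (∃ p, IsPath X.E s' i' p) ∧
      (∃ q₁ q₂, IsConfluence X.E s' j q₁ q₂) ∧
      (∀ e : V × V, (OnPath X.E i j e ∨ OnPath X.E i' j e) → OnPath X.E s' j e)) :=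
  stmt13' X i i' j hi hi'
end

section
/- There exists a directed 3-cycle request graph G_r on vertices {i, j, k} and a substrate graph G_S on six vertices such that the multi-commodity flow LP relaxation for the VNEP admits a feasible fractional solution with x_r = 1 (node mapping variables y all equal to 1/2 and edge flow variables z all equal to 1/2 on appropriate edges), yet no valid integral mapping of G_r onto G_S exists that is covered by the fractional solution; consequently, the integrality gap of the MCF LP formulation for the profit variant of the VNEP is unbounded. -/
/-- The substrate of the counterexample: the directed 6-cycle `u₀ → u₁ → … → u₅ → u₀`. -/
def cycleSubstrate : Finset (Fin 6 × Fin 6) :=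
  Finset.univ.image (fun k : Fin 6 => (k, k + 1))

/-- Allowed substrate nodes for the three virtual nodes `i = 0`, `j = 1`, `k = 2`. -/
def allowedNodes (a : Fin 3) : Finset (Fin 6) :=
  if a = 0 then {0, 3} else if a = 1 then {1, 4} else {2, 5}

/-- Allowed substrate edges for the three virtual edges. -/
def allowedEdges (a b : Fin 3) : Finset (Fin 6 × Fin 6) :=
  if a = 0 ∧ b = 1 then {(0, 1), (3, 4)}
  else if a = 1 ∧ b = 2 then {(1, 2), (4, 5)}
  else if a = 2 ∧ b = 0 then {(2, 3), (5, 0)}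
  else ∅

/-- The virtual edges of the directed 3-cycle request. -/
def reqEdges : Finset (Fin 3 × Fin 3) := {(0, 1), (1, 2), (2, 0)}

lemma path_mem {V : Type*} (E : Finset (V × V)) (a b : V) (p : List V)
    (h : IsPath E a b p) (hab : a ≠ b)
    (hE : ∀ e ∈ E, ∀ e' ∈ E, e.2 ≠ e'.1) : (a, b) ∈ E := by
  obtain ⟨hne, hhd, hlast, hnd, hedge⟩ := h
  match p with
  | [] => exact absurd rfl hne
  | [x] =>
    simp [List.head?] at hhd
    simp [List.getLast?] at hlast
    exact absurd (hhd.symm.trans hlast) hab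
  | x :: y :: rest =>
    have hx : x = a := by simpa [List.head?] using hhd
    subst hx
    have h1 : (x, y) ∈ E := hedge _ (by simp [pathEdges])
    match rest with
    | [] =>
      have hy : y = b := by simpa using hlast
      subst hy; exact h1
    | w :: rest2 =>
      have h2 : (y, w) ∈ E := hedge _ (by simp [pathEdges])
      exact absurd rfl (hE _ h1 _ h2)

/-- For the 3-cycle request on the 6-cycle substrate with antipodal node
placement restrictions, the MCF LP relaxation admits a feasible fractional solution with
`x_r = 1`, yet no valid integral mapping of the request exists at all; hence the
integrality gap of the MCF formulation for the profit variant is unbounded. -/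
theorem stmt18 :
    (∃ (y : Fin 3 → Fin 6 → ℝ) (z : Fin 3 → Fin 3 → Fin 6 × Fin 6 → ℝ),
      (∀ a u, 0 ≤ y a u) ∧ (∀ a u, y a u ≤ 1) ∧
      (∀ a u, u ∉ allowedNodes a → y a u = 0) ∧
      (∀ a, ∑ u, y a u = 1) ∧
      (∀ a b e, 0 ≤ z a b e) ∧
      (∀ a b e, e ∉ allowedEdges a b → z a b e = 0) ∧
      (∀ a b, (a, b) ∈ reqEdges → ∀ u : Fin 6,
        (∑ e ∈ cycleSubstrate.filter (fun e => e.1 = u), z a b e)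
          - (∑ e ∈ cycleSubstrate.filter (fun e => e.2 = u), z a b e)
          = y a u - y b u)) ∧
    ¬ ∃ mV : Fin 3 → Fin 6,
        (∀ a, mV a ∈ allowedNodes a) ∧
        (∀ a b, (a, b) ∈ reqEdges →
          ∃ p : List (Fin 6), IsPath (allowedEdges a b) (mV a) (mV b) p) := by
  constructor
  · refine ⟨fun a u => if u ∈ allowedNodes a then (1:ℝ)/2 else 0,
      fun a b e => if e ∈ allowedEdges a b then (1:ℝ)/2 else 0,
      fun a u => by positivity, fun a u => by dsimp only; split <;> norm_num,
      fun a u h => by simp [h], ?_, fun a b e => by positivity,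
      fun a b e h => by simp [h], ?_⟩
    · intro a
      fin_cases a <;>
        simp [Fin.sum_univ_six, allowedNodes] <;> norm_num
    · have f1 : ∀ u : Fin 6, cycleSubstrate.filter (fun e => e.1 = u) = {(u, u+1)} := by
        decide
      have f2 : ∀ u : Fin 6, cycleSubstrate.filter (fun e => e.2 = u) = {(u-1, u)} := by
        decide
      intro a b hab u
      rw [f1, f2, Finset.sum_singleton, Finset.sum_singleton]
      fin_cases hab <;> fin_cases u <;>
        simp (config := { decide := true }) [allowedEdges, allowedNodes]
  · rintro ⟨m, hm, hpath⟩
    have hne : ∀ a b : Fin 3, (a, b) ∈ reqEdges → m a ≠ m b := by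
      intro a b hab heq
      have ha := hm a
      have hb := hm b
      rw [heq] at ha
      have hmem : m b ∈ allowedNodes a ∩ allowedNodes b := Finset.mem_inter.2 ⟨ha, hb⟩
      have hd : allowedNodes a ∩ allowedNodes b = ∅ := by fin_cases hab <;> decide
      rw [hd] at hmem
      exact absurd hmem (Finset.notMem_empty _)
    have key : ∀ a b : Fin 3, (a, b) ∈ reqEdges → (m a, m b) ∈ allowedEdges a b := by
      intro a b hab
      obtain ⟨p, hp⟩ := hpath a b hab
      exact path_mem _ _ _ _ hp (hne a b hab) (by fin_cases hab <;> decide)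
    have h0 : m 0 = 0 ∨ m 0 = 3 := by simpa [allowedNodes] using hm 0
    have h1 : m 1 = 1 ∨ m 1 = 4 := by simpa [allowedNodes] using hm 1
    have h2 : m 2 = 2 ∨ m 2 = 5 := by simpa [allowedNodes] using hm 2
    have h01 := key 0 1 (by decide)
    have h12 := key 1 2 (by decide)
    have h20 := key 2 0 (by decide)
    rcases h0 with e0 | e0 <;> rcases h1 with e1 | e1 <;> rcases h2 with e2 | e2 <;>
      rw [e0, e1] at h01 <;> rw [e1, e2] at h12 <;> rw [e2, e0] at h20 <;>
      first
        | exact absurd h01 (by decide)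
        | exact absurd h12 (by decide)
        | exact absurd h20 (by decide)
end
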